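/- arXiv:1803.00773 — 3 statements merged into one kernel-verified Lean document; each statement's English description precedes it below -/
import Mathlib

section
/- Let 1 ≤ k ≤ n and let Σ_k be the set of k-sparse vectors of ℝⁿ. For every nonzero z ∈ ℝⁿ, sup_{x ∈ Σ_k∖{0}} ( −⟨x,z⟩ / ( ‖x‖₂ · √( ‖x+z‖_Σ² − ‖x‖₂² − 2⟨x,z⟩ ) ) ) = ( ‖z_{Tᶜ}‖_Σ²/‖z_T‖₂² + 1 )^{−1/2}, where for every x ∈ Σ_k∖{0} the quantity ‖x+z‖_Σ² − ‖x‖₂² − 2⟨x,z⟩ is positive. Consequently, for any norm R on ℝⁿ, the sufficient RIP constant δ_Σ^{suff}(R) = inf_{z ∈ T_R(Σ_k)∖{0}} sup_{x ∈ Σ_k∖{0}} ( −⟨x,z⟩ / ( ‖x‖₂ √( ‖x+z‖_Σ² − ‖x‖₂² − 2⟨x,z⟩ ) ) ) satisfies δ_Σ^{suff}(R) = 1/√( D_Σ(R) + 1 ) with D_Σ(R) := sup_{z ∈ T_R(Σ_k)∖{0}} ‖z_{Tᶜ}‖_Σ²/‖z_T‖₂². -/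
open scoped BigOperators ENNReal RealInnerProductSpace
open MeasureTheory Metric

noncomputable section

/-- The set of `k`-sparse vectors of `ℝⁿ`. -/
def sparseVecs (n k : ℕ) : Set (EuclideanSpace ℝ (Fin n)) :=
  {x | ∃ s : Finset (Fin n), s.card ≤ k ∧ ∀ i ∉ s, x i = 0}

/-- Descent set (collection of descent vectors) of `R` at `x`. -/
def descentCone {n : ℕ} (R : EuclideanSpace ℝ (Fin n) → ℝ) (x : EuclideanSpace ℝ (Fin n)) :
    Set (EuclideanSpace ℝ (Fin n)) := {z | R (x + z) ≤ R x}

/-- Descent vectors of `R` at the model set `S`. -/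
def descentConeSet {n : ℕ} (R : EuclideanSpace ℝ (Fin n) → ℝ)
    (S : Set (EuclideanSpace ℝ (Fin n))) : Set (EuclideanSpace ℝ (Fin n)) :=
  ⋃ x ∈ S, descentCone R x

/-- Weighted ℓ¹-norm `‖z‖_w = ∑ i, w i * |z i|`. -/
def wNorm {n : ℕ} (w : Fin n → ℝ) (z : EuclideanSpace ℝ (Fin n)) : ℝ := ∑ i, w i * |z i|

/-- Restriction of a vector to a set of coordinates (`z_S`). -/
def coordRestrict {n : ℕ} (z : EuclideanSpace ℝ (Fin n)) (S : Finset (Fin n)) :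
    EuclideanSpace ℝ (Fin n) := WithLp.toLp 2 (fun i => if i ∈ S then z i else 0)

/-- Atomic norm `‖·‖_Σ` generated by the `k`-sparse unit vectors: the gauge of the convex hull
of `{u ∈ Σ_k : ‖u‖₂ = 1}`. -/
def atomNormSigma (n k : ℕ) (z : EuclideanSpace ℝ (Fin n)) : ℝ :=
  gauge (convexHull ℝ {u : EuclideanSpace ℝ (Fin n) | u ∈ sparseVecs n k ∧ ‖u‖ = 1}) z




namespace SigmaAux
open scoped Pointwise
open Set

def Atoms (n k : ℕ) : Set (EuclideanSpace ℝ (Fin n)) :=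
  {u | u ∈ sparseVecs n k ∧ ‖u‖ = 1}

def CH (n k : ℕ) : Set (EuclideanSpace ℝ (Fin n)) := convexHull ℝ (Atoms n k)

variable {n k : ℕ}

lemma norm_sq_eq (x : EuclideanSpace ℝ (Fin n)) : ‖x‖ ^ 2 = ∑ i, x i ^ 2 := by
  rw [EuclideanSpace.norm_eq, Real.sq_sqrt (by positivity)]
  simp [sq_abs]

lemma inner_eq (x y : EuclideanSpace ℝ (Fin n)) : ⟪x, y⟫ = ∑ i, x i * y i := by
  simp [PiLp.inner_apply, mul_comm]

lemma coordRestrict_normsq (z : EuclideanSpace ℝ (Fin n)) (S : Finset (Fin n)) :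
    ‖coordRestrict z S‖ ^ 2 = ∑ i ∈ S, z i ^ 2 := by
  rw [norm_sq_eq]
  rw [show (fun i => (coordRestrict z S) i ^ 2) = fun i => if i ∈ S then z i ^2 else 0 by
    funext i; simp only [coordRestrict, PiLp.toLp_apply]; split <;> simp]
  rw [Finset.sum_ite_mem, Finset.univ_inter]

lemma coordRestrict_pythagoras (z : EuclideanSpace ℝ (Fin n)) (S : Finset (Fin n)) :
    ‖coordRestrict z S‖ ^ 2 + ‖coordRestrict z Sᶜ‖ ^ 2 = ‖z‖ ^ 2 := by
  rw [coordRestrict_normsq, coordRestrict_normsq, norm_sq_eq]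
  exact Finset.sum_add_sum_compl S _

lemma coordRestrict_sparse (z : EuclideanSpace ℝ (Fin n)) (S : Finset (Fin n))
    (hz : z ∈ sparseVecs n k) : coordRestrict z S ∈ sparseVecs n k := by
  obtain ⟨s, hs, h0⟩ := hz
  exact ⟨s, hs, fun i hi => by simp [coordRestrict, h0 i hi]⟩

lemma coordRestrict_sparse_card (z : EuclideanSpace ℝ (Fin n)) (S : Finset (Fin n))
    (hS : S.card ≤ k) : coordRestrict z S ∈ sparseVecs n k :=
  ⟨S, hS, fun i hi => by simp [coordRestrict, hi]⟩


lemma convexCH : Convex ℝ (CH n k) := convex_convexHull ℝ _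

lemma atoms_subset : Atoms n k ⊆ CH n k := subset_convexHull ℝ _

lemma neg_atom {u : EuclideanSpace ℝ (Fin n)} (hu : u ∈ Atoms n k) : -u ∈ Atoms n k := by
  obtain ⟨⟨s, hs, h0⟩, hn⟩ := hu
  exact ⟨⟨s, hs, fun i hi => by simp [h0 i hi]⟩, by simpa using hn⟩

lemma default_atom (hk : 1 ≤ k) (hkn : k ≤ n) :
    EuclideanSpace.single (⟨0, by omega⟩ : Fin n) (1:ℝ) ∈ Atoms n k := by
  refine ⟨⟨{⟨0, by omega⟩}, by simpa using hk, fun i hi => ?_⟩, by simp⟩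
  simp only [Finset.mem_singleton] at hi
  simp [EuclideanSpace.single_apply, hi]

lemma zero_mem_CH (hk : 1 ≤ k) (hkn : k ≤ n) : (0:EuclideanSpace ℝ (Fin n)) ∈ CH n k := by
  have ha := atoms_subset (default_atom hk hkn)
  have hb := atoms_subset (neg_atom (default_atom hk hkn))
  have := convexCH ha hb (by norm_num : (0:ℝ) ≤ 1/2) (by norm_num : (0:ℝ) ≤ 1/2) (by norm_num)
  simpa using this

lemma sparse_le_one_mem_CH (hk : 1 ≤ k) (hkn : k ≤ n) {u : EuclideanSpace ℝ (Fin n)}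
    (hu : u ∈ sparseVecs n k) (hn : ‖u‖ ≤ 1) : u ∈ CH n k := by
  rcases eq_or_ne u 0 with rfl | hne
  · exact zero_mem_CH hk hkn
  · have hnu : 0 < ‖u‖ := norm_pos_iff.mpr hne
    have hatom : ‖u‖⁻¹ • u ∈ Atoms n k := by
      constructor
      · obtain ⟨s, hs, h0⟩ := hu
        exact ⟨s, hs, fun i hi => by simp [h0 i hi, PiLp.smul_apply]⟩
      · simp [norm_smul, abs_of_pos (inv_pos.mpr hnu), inv_mul_cancel₀ hnu.ne']
    have := convexCH (atoms_subset hatom) (zero_mem_CH hk hkn) hnu.le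
      (by linarith : (0:ℝ) ≤ 1 - ‖u‖) (by ring)
    simpa [smul_smul, mul_inv_cancel₀ hnu.ne'] using this


/-- Sum of sparse vectors lies in (sum of norms) • CH, provided sum of norms > 0. -/
lemma memcomb (hk : 1 ≤ k) (hkn : k ≤ n) {ι : Type*} (t : Finset ι)
    (y : ι → EuclideanSpace ℝ (Fin n)) (hy : ∀ i ∈ t, y i ∈ sparseVecs n k)
    (hM : 0 < ∑ i ∈ t, ‖y i‖) :
    (∑ i ∈ t, y i) ∈ (∑ i ∈ t, ‖y i‖) • CH n k := by
  classical
  set M := ∑ i ∈ t, ‖y i‖ with hMdef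
  set a₀ := EuclideanSpace.single (⟨0, by omega⟩ : Fin n) (1:ℝ)
  set u : ι → EuclideanSpace ℝ (Fin n) := fun i => if h : y i = 0 then a₀ else ‖y i‖⁻¹ • y i
    with hu
  have hmem : ∀ i ∈ t, u i ∈ Atoms n k := by
    intro i hi
    by_cases h : y i = 0
    · simp only [hu, h, dif_pos]; exact default_atom hk hkn
    · simp only [hu, dif_neg h]
      have hnu : 0 < ‖y i‖ := norm_pos_iff.mpr h
      obtain ⟨s, hs, h0⟩ := hy i hi
      refine ⟨⟨s, hs, fun j hj => ?_⟩,
        by simp [norm_smul, abs_of_pos (inv_pos.mpr hnu), inv_mul_cancel₀ hnu.ne']⟩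
      simp [h0 j hj]
  have hc : (∑ i ∈ t, (‖y i‖ / M) • u i) ∈ CH n k := by
    apply convexCH.sum_mem (fun i _ => by positivity)
    · rw [← Finset.sum_div, div_self hM.ne']
    · exact fun i hi => atoms_subset (hmem i hi)
  have hrepr : ∑ i ∈ t, y i = M • ∑ i ∈ t, (‖y i‖ / M) • u i := by
    rw [Finset.smul_sum]
    refine Finset.sum_congr rfl fun i hi => ?_
    by_cases h : y i = 0
    · simp [h, hu]
    · simp only [hu, dif_neg h, smul_smul]
      rw [show M * (‖y i‖ / M * ‖y i‖⁻¹) = 1 by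
        have h2 : ‖y i‖ ≠ 0 := norm_ne_zero_iff.mpr h
        field_simp]
      rw [one_smul]
  exact hrepr ▸ smul_mem_smul_set hc

lemma gauge_sum_le (hk : 1 ≤ k) (hkn : k ≤ n) {ι : Type*} (t : Finset ι)
    (y : ι → EuclideanSpace ℝ (Fin n)) (hy : ∀ i ∈ t, y i ∈ sparseVecs n k) :
    gauge (CH n k) (∑ i ∈ t, y i) ≤ ∑ i ∈ t, ‖y i‖ := by
  rcases lt_or_ge 0 (∑ i ∈ t, ‖y i‖) with hM | hM
  · exact gauge_le_of_mem (le_of_lt hM) (memcomb hk hkn t y hy hM)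
  · have hall : ∀ i ∈ t, y i = 0 := by
      intro i hi
      have h1 : ∑ i ∈ t, ‖y i‖ = 0 :=
        le_antisymm hM (Finset.sum_nonneg fun i _ => norm_nonneg _)
      have := (Finset.sum_eq_zero_iff_of_nonneg (fun i _ => norm_nonneg (y i))).mp h1 i hi
      exact norm_eq_zero.mp this
    rw [Finset.sum_eq_zero hall, gauge_zero]
    exact Finset.sum_nonneg fun i _ => norm_nonneg _

/-- Absorbency: every vector is in some positive multiple of CH. -/
lemma exists_pos_mem_smulCH (hk : 1 ≤ k) (hkn : k ≤ n) (v : EuclideanSpace ℝ (Fin n)) :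
    ∃ r : ℝ, 0 < r ∧ v ∈ r • CH n k := by
  rcases eq_or_ne v 0 with rfl | hv
  · exact ⟨1, one_pos, by simpa using smul_mem_smul_set (a := (1:ℝ)) (zero_mem_CH hk hkn)⟩
  · set y : Fin n → EuclideanSpace ℝ (Fin n) := fun i => EuclideanSpace.single i (v i) with hy
    have hsum : ∑ i, y i = v := by
      ext j
      simp only [hy]
      rw [WithLp.ofLp_sum, Fintype.sum_apply]
      simp [EuclideanSpace.single_apply]
    have hsparse : ∀ i ∈ Finset.univ, y i ∈ sparseVecs n k := by
      intro i _
      refine ⟨{i}, by simpa using hk, fun j hj => ?_⟩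
      simp only [Finset.mem_singleton] at hj
      simp [hy, EuclideanSpace.single_apply, hj]
    have hM : 0 < ∑ i, ‖y i‖ := by
      have : ∃ i, v i ≠ 0 := by
        by_contra h
        push_neg at h
        exact hv (PiLp.ext (by simpa using h))
      obtain ⟨i, hi⟩ := this
      refine Finset.sum_pos' (fun j _ => norm_nonneg _) ⟨i, Finset.mem_univ i, ?_⟩
      simp only [hy]
      rw [EuclideanSpace.norm_single]
      simpa using hi
    exact ⟨_, hM, hsum ▸ memcomb hk hkn Finset.univ y hsparse hM⟩

/-- Dual lower bound. -/
lemma inner_le_gauge (hk : 1 ≤ k) (hkn : k ≤ n) (v w : EuclideanSpace ℝ (Fin n))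
    (hw : ∀ u ∈ Atoms n k, ⟪u, w⟫ ≤ 1) : ⟪v, w⟫ ≤ gauge (CH n k) v := by
  have hCH : ∀ c ∈ CH n k, ⟪c, w⟫ ≤ 1 := by
    intro c hc
    have hconv : Convex ℝ {x : EuclideanSpace ℝ (Fin n) | ⟪x, w⟫ ≤ 1} :=
      convex_halfSpace_le ⟨fun a b => inner_add_left a b w, fun r x => real_inner_smul_left x w r⟩ 1
    exact convexHull_min hw hconv hc
  rw [gauge]
  refine le_csInf ?_ ?_
  · obtain ⟨r, hr, hmem⟩ := exists_pos_mem_smulCH hk hkn v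
    exact ⟨r, hr, hmem⟩
  · rintro r ⟨hr, c, hc, rfl⟩
    calc ⟪r • c, w⟫ = r * ⟪c, w⟫ := real_inner_smul_left _ _ _
    _ ≤ r * 1 := by exact mul_le_mul_of_nonneg_left (hCH c hc) hr.le
    _ = r := mul_one r

/-- ℓ² lower bound for the atomic norm. -/
lemma norm_le_gauge (hk : 1 ≤ k) (hkn : k ≤ n) (v : EuclideanSpace ℝ (Fin n)) :
    ‖v‖ ≤ gauge (CH n k) v := by
  rcases eq_or_ne v 0 with rfl | hv
  · simp [gauge_zero]
  · have hnv : 0 < ‖v‖ := norm_pos_iff.mpr hv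
    have key := inner_le_gauge hk hkn v (‖v‖⁻¹ • v) ?_
    · have : ⟪v, ‖v‖⁻¹ • v⟫ = ‖v‖ := by
        rw [real_inner_smul_right, real_inner_self_eq_norm_sq]
        field_simp
      rwa [this] at key
    · intro u hu
      calc ⟪u, ‖v‖⁻¹ • v⟫ ≤ |⟪u, ‖v‖⁻¹ • v⟫| := le_abs_self _
      _ ≤ ‖u‖ * ‖‖v‖⁻¹ • v‖ := abs_real_inner_le_norm _ _
      _ = 1 := by
        rw [hu.2, one_mul, norm_smul, norm_inv, norm_norm, inv_mul_cancel₀ hnv.ne']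


/-- If a linear map sends atoms into CH, it contracts the gauge. -/
lemma gauge_map_le (hk : 1 ≤ k) (hkn : k ≤ n) (L : EuclideanSpace ℝ (Fin n) →ₗ[ℝ] EuclideanSpace ℝ (Fin n))
    (hL : ∀ u ∈ Atoms n k, L u ∈ CH n k) (v : EuclideanSpace ℝ (Fin n)) :
    gauge (CH n k) (L v) ≤ gauge (CH n k) v := by
  have hC : ∀ c ∈ CH n k, L c ∈ CH n k := by
    intro c hc
    have : CH n k ⊆ L ⁻¹' (CH n k) :=
      convexHull_min (fun u hu => hL u hu) (convexCH.linear_preimage L)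
    exact this hc
  conv_rhs => rw [gauge]
  refine le_csInf ?_ ?_
  · obtain ⟨r, hr, hmem⟩ := exists_pos_mem_smulCH hk hkn v
    exact ⟨r, hr, hmem⟩
  · rintro r ⟨hr, c, hc, rfl⟩
    refine gauge_le_of_mem hr.le ?_
    rw [L.map_smul]
    exact smul_mem_smul_set (hC c hc)

/-- Coordinatewise domination contracts the gauge. -/
lemma gauge_mono_coord (hk : 1 ≤ k) (hkn : k ≤ n) (u w : EuclideanSpace ℝ (Fin n))
    (h : ∀ i, |u i| ≤ |w i|) : gauge (CH n k) u ≤ gauge (CH n k) w := by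
  classical
  set d : Fin n → ℝ := fun i => if w i = 0 then 0 else u i / w i with hd
  have hd1 : ∀ i, |d i| ≤ 1 := by
    intro i
    by_cases h0 : w i = 0
    · simp [hd, h0]
    · simp only [hd, if_neg h0, abs_div]
      rw [div_le_one (abs_pos.mpr h0)]
      exact h i
  set L : EuclideanSpace ℝ (Fin n) →ₗ[ℝ] EuclideanSpace ℝ (Fin n) :=
    { toFun := fun v => WithLp.toLp 2 (fun i => d i * v i)
      map_add' := by intro a b; ext i; simp [PiLp.add_apply]; ring
      map_smul' := by intro c a; ext i; simp [PiLp.smul_apply, smul_eq_mul]; ring } with hLdef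
  have hLw : L w = u := by
    ext i
    by_cases h0 : w i = 0
    · have : u i = 0 := by
        have := h i
        rw [h0, abs_zero] at this
        exact abs_eq_zero.mp (le_antisymm this (abs_nonneg _))
      simp [hLdef, hd, h0, this]
    · simp [hLdef, hd, h0, div_mul_cancel₀ _ h0]
  have hL : ∀ a ∈ Atoms n k, L a ∈ CH n k := by
    intro a ha
    refine sparse_le_one_mem_CH hk hkn ?_ ?_
    · obtain ⟨⟨s, hs, h0⟩, _⟩ := ha
      exact ⟨s, hs, fun i hi => by simp [hLdef, h0 i hi]⟩
    · rw [← ha.2]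
      have hsq : ‖L a‖ ^ 2 ≤ ‖a‖ ^ 2 := by
        rw [norm_sq_eq, norm_sq_eq]
        refine Finset.sum_le_sum fun i _ => ?_
        have : (L a) i = d i * a i := rfl
        rw [this, mul_pow]
        calc d i ^ 2 * a i ^ 2 ≤ 1 * a i ^ 2 := by
              refine mul_le_mul_of_nonneg_right ?_ (sq_nonneg _)
              rw [← one_pow 2, ← sq_abs]
              exact pow_le_pow_left₀ (abs_nonneg _) (hd1 i) 2
        _ = a i ^ 2 := one_mul _
      have := Real.sqrt_le_sqrt hsq
      rwa [Real.sqrt_sq (norm_nonneg _), Real.sqrt_sq (norm_nonneg _)] at this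
  rw [← hLw]
  exact gauge_map_le hk hkn L hL w

/-- Permutations preserve the gauge (we only need ≤). -/
lemma gauge_perm_le (hk : 1 ≤ k) (hkn : k ≤ n) (π : Equiv.Perm (Fin n)) (v : EuclideanSpace ℝ (Fin n)) :
    gauge (CH n k) (WithLp.toLp 2 (fun i => v (π i))) ≤ gauge (CH n k) v := by
  classical
  set L : EuclideanSpace ℝ (Fin n) →ₗ[ℝ] EuclideanSpace ℝ (Fin n) :=
    { toFun := fun x => WithLp.toLp 2 (fun i => x (π i))
      map_add' := by intro a b; ext i; simp [PiLp.add_apply]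
      map_smul' := by intro c a; ext i; simp [PiLp.smul_apply] } with hLdef
  have hL : ∀ a ∈ Atoms n k, L a ∈ CH n k := by
    intro a ha
    refine sparse_le_one_mem_CH hk hkn ?_ ?_
    · obtain ⟨⟨s, hs, h0⟩, _⟩ := ha
      refine ⟨s.image π.symm, (Finset.card_image_le).trans hs, fun i hi => ?_⟩
      have : π i ∉ s := by
        intro hmem
        exact hi (Finset.mem_image.mpr ⟨π i, hmem, by simp⟩)
      simp [hLdef, h0 _ this]
    · have : ‖L a‖ = ‖a‖ := by
        have h2 : ‖L a‖ ^ 2 = ‖a‖ ^ 2 := by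
          rw [norm_sq_eq, norm_sq_eq]
          exact Equiv.sum_comp π (fun i => a i ^ 2)
        have := congrArg Real.sqrt h2
        rwa [Real.sqrt_sq (norm_nonneg _), Real.sqrt_sq (norm_nonneg _)] at this
      rw [this, ha.2]
  exact gauge_map_le hk hkn L hL v


lemma coordRestrict_smul (c : ℝ) (z : EuclideanSpace ℝ (Fin n)) (S : Finset (Fin n)) :
    coordRestrict (c • z) S = c • coordRestrict z S := by
  ext i; simp only [coordRestrict, PiLp.toLp_apply, PiLp.smul_apply, smul_eq_mul]
  split <;> simp

lemma coordRestrict_sum {ι : Type*} (t : Finset ι) (y : ι → EuclideanSpace ℝ (Fin n))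
    (S : Finset (Fin n)) :
    coordRestrict (∑ i ∈ t, y i) S = ∑ i ∈ t, coordRestrict (y i) S := by
  ext j
  rw [show (∑ i ∈ t, coordRestrict (y i) S) j = ∑ i ∈ t, coordRestrict (y i) S j by
    rw [WithLp.ofLp_sum, Finset.sum_apply]]
  simp only [coordRestrict, PiLp.toLp_apply]
  split
  · rw [WithLp.ofLp_sum, Finset.sum_apply]
  · simp

/-- Key superadditivity: gauge² ≥ ‖v_S‖² + gauge(v_{Sᶜ})² for |S| ≤ k. -/
lemma lemA (hk : 1 ≤ k) (hkn : k ≤ n) (S : Finset (Fin n)) (hS : S.card ≤ k)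
    (v : EuclideanSpace ℝ (Fin n)) :
    ‖coordRestrict v S‖ ^ 2 + (gauge (CH n k) (coordRestrict v Sᶜ)) ^ 2
      ≤ (gauge (CH n k) v) ^ 2 := by
  set G : ℝ := Real.sqrt (‖coordRestrict v S‖ ^ 2 + (gauge (CH n k) (coordRestrict v Sᶜ)) ^ 2)
    with hG
  have hGnn : 0 ≤ G := Real.sqrt_nonneg _
  have hGsq : G ^ 2 = ‖coordRestrict v S‖ ^ 2 + (gauge (CH n k) (coordRestrict v Sᶜ)) ^ 2 := by
    rw [hG, Real.sq_sqrt (by positivity)]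
  have key : G ≤ gauge (CH n k) v := by
    rw [gauge]
    refine le_csInf ?_ ?_
    · obtain ⟨r, hr, hmem⟩ := exists_pos_mem_smulCH hk hkn v
      exact ⟨r, hr, hmem⟩
    · rintro r ⟨hr, c, hc, rfl⟩
      -- c ∈ CH n k : get convex representation
      rw [CH, convexHull_eq] at hc
      obtain ⟨ι, t, w, y, hw0, hw1, hy, hcm⟩ := hc
      rw [Finset.centerMass_eq_of_sum_1 _ _ hw1] at hcm
      subst hcm
      -- v = r • ∑ w i • y i
      have hvS : coordRestrict (r • ∑ i ∈ t, w i • y i) S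
          = ∑ i ∈ t, (r * w i) • coordRestrict (y i) S := by
        rw [coordRestrict_smul, coordRestrict_sum, Finset.smul_sum]
        exact Finset.sum_congr rfl fun i _ => by
          rw [coordRestrict_smul, smul_smul]
      have hvSc : coordRestrict (r • ∑ i ∈ t, w i • y i) Sᶜ
          = ∑ i ∈ t, (r * w i) • coordRestrict (y i) Sᶜ := by
        rw [coordRestrict_smul, coordRestrict_sum, Finset.smul_sum]
        exact Finset.sum_congr rfl fun i _ => by
          rw [coordRestrict_smul, smul_smul]
      set cc : ι → ℝ := fun i => ‖coordRestrict (y i) S‖ with hcc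
      set ss : ι → ℝ := fun i => ‖coordRestrict (y i) Sᶜ‖ with hss
      have hrw : ∀ i ∈ t, 0 ≤ r * w i := fun i hi => mul_nonneg hr.le (hw0 i hi)
      -- bound ‖v_S‖
      have h1 : ‖coordRestrict (r • ∑ i ∈ t, w i • y i) S‖ ≤ ∑ i ∈ t, (r * w i) * cc i := by
        rw [hvS]
        refine (norm_sum_le _ _).trans ?_
        refine Finset.sum_le_sum fun i hi => ?_
        rw [norm_smul, Real.norm_eq_abs, abs_of_nonneg (hrw i hi)]
      -- bound gauge of v_{Sᶜ}
      have h2 : gauge (CH n k) (coordRestrict (r • ∑ i ∈ t, w i • y i) Sᶜ)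
          ≤ ∑ i ∈ t, (r * w i) * ss i := by
        rw [hvSc]
        have := gauge_sum_le hk hkn t (fun i => (r * w i) • coordRestrict (y i) Sᶜ) ?_
        · refine this.trans (le_of_eq ?_)
          refine Finset.sum_congr rfl fun i hi => ?_
          rw [norm_smul, Real.norm_eq_abs, abs_of_nonneg (hrw i hi)]
        · intro i hi
          obtain ⟨s, hs, h0⟩ := coordRestrict_sparse (y i) Sᶜ (hy i hi).1
          exact ⟨s, hs, fun j hj => by simp [PiLp.smul_apply, h0 j hj]⟩
      -- atoms have cc² + ss² = 1
      have hpyth : ∀ i ∈ t, cc i ^ 2 + ss i ^ 2 = 1 := by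
        intro i hi
        rw [hcc, hss]
        simp only
        rw [coordRestrict_pythagoras (y i) S, (hy i hi).2, one_pow]
      -- Cauchy-Schwarz
      have hCS : (∑ i ∈ t, (r * w i) * cc i) ^ 2 + (∑ i ∈ t, (r * w i) * ss i) ^ 2 ≤ r ^ 2 := by
        have e1 : ∀ f : ι → ℝ, (∀ i ∈ t, 0 ≤ f i) →
            (∑ i ∈ t, (r * w i) * f i) ^ 2 ≤ r ^ 2 * ∑ i ∈ t, w i * f i ^ 2 := by
          intro f hf
          have := Finset.sum_mul_sq_le_sq_mul_sq t (fun i => Real.sqrt (r * w i))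
            (fun i => Real.sqrt (r * w i) * f i)
          have he : ∀ i ∈ t, Real.sqrt (r * w i) * (Real.sqrt (r * w i) * f i)
              = (r * w i) * f i := by
            intro i hi
            rw [← mul_assoc, Real.mul_self_sqrt (hrw i hi)]
          calc (∑ i ∈ t, (r * w i) * f i) ^ 2
              = (∑ i ∈ t, Real.sqrt (r * w i) * (Real.sqrt (r * w i) * f i)) ^ 2 := by
                rw [Finset.sum_congr rfl he]
            _ ≤ (∑ i ∈ t, Real.sqrt (r * w i) ^ 2) * ∑ i ∈ t, (Real.sqrt (r * w i) * f i) ^ 2 :=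
                this
            _ = (∑ i ∈ t, (r * w i)) * ∑ i ∈ t, (r * w i) * f i ^ 2 := by
                congr 1
                · exact Finset.sum_congr rfl fun i hi => Real.sq_sqrt (hrw i hi)
                · refine Finset.sum_congr rfl fun i hi => ?_
                  rw [mul_pow, Real.sq_sqrt (hrw i hi)]
            _ = r ^ 2 * ∑ i ∈ t, w i * f i ^ 2 := by
                have e2 : ∑ i ∈ t, (r * w i) = r := by
                  rw [← Finset.mul_sum, hw1, mul_one]
                have e3 : ∑ i ∈ t, (r * w i) * f i ^ 2 = r * ∑ i ∈ t, w i * f i ^ 2 := by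
                  rw [Finset.mul_sum]
                  exact Finset.sum_congr rfl fun i hi => by ring
                rw [e2, e3, ← mul_assoc, sq]
        have hA := e1 cc (fun i _ => norm_nonneg _)
        have hB := e1 ss (fun i _ => norm_nonneg _)
        have : (∑ i ∈ t, (r * w i) * cc i) ^ 2 + (∑ i ∈ t, (r * w i) * ss i) ^ 2
            ≤ r ^ 2 * (∑ i ∈ t, w i * cc i ^ 2 + ∑ i ∈ t, w i * ss i ^ 2) := by
          rw [mul_add]; exact add_le_add hA hB
        refine this.trans (le_of_eq ?_)
        rw [← Finset.sum_add_distrib]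
        have : ∑ i ∈ t, (w i * cc i ^ 2 + w i * ss i ^ 2) = ∑ i ∈ t, w i := by
          refine Finset.sum_congr rfl fun i hi => ?_
          rw [← mul_add, hpyth i hi, mul_one]
        rw [this, hw1, mul_one]
      -- conclude G ≤ r
      have hGle : G ^ 2 ≤ r ^ 2 := by
        rw [hGsq]
        have g1 : ‖coordRestrict (r • ∑ i ∈ t, w i • y i) S‖ ^ 2
            ≤ (∑ i ∈ t, (r * w i) * cc i) ^ 2 := by
          refine pow_le_pow_left₀ (norm_nonneg _) h1 2
        have g2 : (gauge (CH n k) (coordRestrict (r • ∑ i ∈ t, w i • y i) Sᶜ)) ^ 2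
            ≤ (∑ i ∈ t, (r * w i) * ss i) ^ 2 := by
          refine pow_le_pow_left₀ (gauge_nonneg _) h2 2
        exact (add_le_add g1 g2).trans hCS
      have := Real.sqrt_le_sqrt hGle
      rwa [Real.sqrt_sq hGnn, Real.sqrt_sq hr.le] at this
  calc ‖coordRestrict v S‖ ^ 2 + (gauge (CH n k) (coordRestrict v Sᶜ)) ^ 2 = G ^ 2 := hGsq.symm
  _ ≤ (gauge (CH n k) v) ^ 2 := pow_le_pow_left₀ hGnn key 2


lemma coordRestrict_apply (z : EuclideanSpace ℝ (Fin n)) (S : Finset (Fin n)) (i : Fin n) :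
    coordRestrict z S i = if i ∈ S then z i else 0 := rfl

/-- T (k largest coordinates) maximizes ‖z_S‖ and minimizes gauge(z_{Sᶜ}) among k-sets. -/
lemma swap_induction (hk : 1 ≤ k) (hkn : k ≤ n)
    (z : EuclideanSpace ℝ (Fin n)) (T : Finset (Fin n)) (hTcard : T.card = k)
    (hTmax : ∀ i ∈ T, ∀ j ∉ T, |z j| ≤ |z i|) :
    ∀ S : Finset (Fin n), S.card = k →
      ‖coordRestrict z S‖ ≤ ‖coordRestrict z T‖ ∧
      gauge (CH n k) (coordRestrict z Tᶜ) ≤ gauge (CH n k) (coordRestrict z Sᶜ) := by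
  classical
  suffices H : ∀ m : ℕ, ∀ S : Finset (Fin n), S.card = k → (S \ T).card = m →
      ‖coordRestrict z S‖ ≤ ‖coordRestrict z T‖ ∧
      gauge (CH n k) (coordRestrict z Tᶜ) ≤ gauge (CH n k) (coordRestrict z Sᶜ) by
    exact fun S hS => H (S \ T).card S hS rfl
  intro m
  induction m with
  | zero =>
    intro S hS hcard
    have hsub : S ⊆ T := by
      intro a ha
      by_contra hnot
      have : a ∈ S \ T := Finset.mem_sdiff.mpr ⟨ha, hnot⟩
      rw [Finset.card_eq_zero.mp hcard] at this
      exact absurd this (Finset.notMem_empty a)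
    have : S = T := Finset.eq_of_subset_of_card_le hsub (by rw [hS, hTcard])
    subst this
    exact ⟨le_refl _, le_refl _⟩
  | succ m ih =>
    intro S hS hcard
    have hST : (S \ T).Nonempty := by
      rw [← Finset.card_pos, hcard]; omega
    obtain ⟨j, hj⟩ := hST
    have hjS : j ∈ S := (Finset.mem_sdiff.mp hj).1
    have hjT : j ∉ T := (Finset.mem_sdiff.mp hj).2
    have hTS : (T \ S).Nonempty := by
      rw [← Finset.card_pos, Finset.card_sdiff_comm (by rw [hS, hTcard]), hcard]; omega
    obtain ⟨i, hi⟩ := hTS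
    have hiT : i ∈ T := (Finset.mem_sdiff.mp hi).1
    have hiS : i ∉ S := (Finset.mem_sdiff.mp hi).2
    have hij : i ≠ j := fun h => hiS (h ▸ hjS)
    have hzji : |z j| ≤ |z i| := hTmax i hiT j hjT
    set S' := insert i (S.erase j) with hS'
    have hiSe : i ∉ S.erase j := fun h => hiS (Finset.mem_of_mem_erase h)
    have hS'card : S'.card = k := by
      rw [hS', Finset.card_insert_of_notMem hiSe, Finset.card_erase_of_mem hjS, hS]
      omega
    have hS'T : (S' \ T).card = m := by
      have : S' \ T = (S \ T).erase j := by
        ext a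
        simp only [hS', Finset.mem_sdiff, Finset.mem_insert, Finset.mem_erase]
        constructor
        · rintro ⟨ha | ⟨haj, haS⟩, haT⟩
          · exact absurd (ha ▸ hiT) haT
          · exact ⟨haj, haS, haT⟩
        · rintro ⟨haj, haS, haT⟩
          exact ⟨Or.inr ⟨haj, haS⟩, haT⟩
      rw [this, Finset.card_erase_of_mem hj, hcard]
      omega
    obtain ⟨ihnorm, ihgauge⟩ := ih S' hS'card hS'T
    constructor
    · -- ‖z_S‖ ≤ ‖z_S'‖ ≤ ‖z_T‖
      refine le_trans ?_ ihnorm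
      have hsq : ‖coordRestrict z S‖ ^ 2 ≤ ‖coordRestrict z S'‖ ^ 2 := by
        rw [coordRestrict_normsq, coordRestrict_normsq, hS',
          Finset.sum_insert hiSe, ← Finset.add_sum_erase _ _ hjS]
        have : z j ^ 2 ≤ z i ^ 2 := by
          rw [← sq_abs (z j), ← sq_abs (z i)]
          exact pow_le_pow_left₀ (abs_nonneg _) hzji 2
        linarith
      have := Real.sqrt_le_sqrt hsq
      rwa [Real.sqrt_sq (norm_nonneg _), Real.sqrt_sq (norm_nonneg _)] at this
    · -- gauge(z_{Tᶜ}) ≤ gauge(z_{S'ᶜ}) ≤ gauge(z_{Sᶜ})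
      refine le_trans ihgauge ?_
      set π := Equiv.swap i j with hπ
      set wv : EuclideanSpace ℝ (Fin n) := WithLp.toLp 2 (fun l => coordRestrict z Sᶜ (π l)) with hwv
      have step1 : gauge (CH n k) wv ≤ gauge (CH n k) (coordRestrict z Sᶜ) :=
        gauge_perm_le hk hkn π _
      refine le_trans ?_ step1
      refine gauge_mono_coord hk hkn _ _ ?_
      intro l
      by_cases hlj : l = j
      · subst hlj
        have h1 : coordRestrict z S'ᶜ l = z l := by
          have : l ∉ S' := by
            simp only [hS', Finset.mem_insert, Finset.mem_erase]
            push_neg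
            exact ⟨fun h => absurd h.symm hij, fun h => absurd rfl h⟩
          simp [coordRestrict, Finset.mem_compl, this]
        have h2 : wv l = z i := by
          show coordRestrict z Sᶜ (π l) = z i
          rw [hπ, Equiv.swap_apply_right, coordRestrict_apply,
            if_pos (Finset.mem_compl.mpr hiS)]
        rw [h1, h2]
        exact hzji
      · by_cases hli : l = i
        · subst hli
          have h1 : coordRestrict z S'ᶜ l = 0 := by
            have : l ∈ S' := Finset.mem_insert_self _ _
            simp [coordRestrict, Finset.mem_compl, this]
          have h2 : wv l = 0 := by
            show coordRestrict z Sᶜ (π l) = 0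
            rw [hπ, Equiv.swap_apply_left, coordRestrict_apply,
              if_neg (fun h => (Finset.mem_compl.mp h) hjS)]
          rw [h1, h2]
        · have hπl : π l = l := by
            rw [hπ, Equiv.swap_apply_of_ne_of_ne hli hlj]
          have hmem : l ∈ S' ↔ l ∈ S := by
            simp only [hS', Finset.mem_insert, Finset.mem_erase]
            constructor
            · rintro (h | ⟨_, h⟩)
              · exact absurd h hli
              · exact h
            · exact fun h => Or.inr ⟨hlj, h⟩
          have heq : wv l = coordRestrict z Sᶜ l := by
            show coordRestrict z Sᶜ (π l) = coordRestrict z Sᶜ l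
            rw [hπl]
          rw [heq, coordRestrict_apply, coordRestrict_apply]
          by_cases hlS : l ∈ S
          · have h1 : l ∉ Sᶜ := fun h => (Finset.mem_compl.mp h) hlS
            have h2 : l ∉ S'ᶜ := fun h => (Finset.mem_compl.mp h) (hmem.mpr hlS)
            simp [h1, h2]
          · have h1 : l ∈ Sᶜ := Finset.mem_compl.mpr hlS
            have h2 : l ∈ S'ᶜ := Finset.mem_compl.mpr (fun h => hlS (hmem.mp h))
            simp [h1, h2]


section Part1
variable (hk : 1 ≤ k) (hkn : k ≤ n) (z : EuclideanSpace ℝ (Fin n)) (hz : z ≠ 0)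
  (T : Finset (Fin n)) (hTcard : T.card = k)
  (hTmax : ∀ i ∈ T, ∀ j ∉ T, |z j| ≤ |z i|)

include hk hkn hz hTcard hTmax

lemma zT_pos : 0 < ‖coordRestrict z T‖ := by
  rw [norm_pos_iff]
  intro h0
  apply hz
  have hTz : ∀ i ∈ T, z i = 0 := by
    intro i hi
    have := congrArg (fun v : EuclideanSpace ℝ (Fin n) => v i) h0
    simp only at this
    rwa [coordRestrict_apply, if_pos hi] at this
  have hTne : T.Nonempty := Finset.card_pos.mp (by omega)
  obtain ⟨i0, hi0⟩ := hTne
  ext j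
  by_cases hj : j ∈ T
  · exact hTz j hj
  · have := hTmax i0 hi0 j hj
    rw [hTz i0 hi0, abs_zero] at this
    exact abs_eq_zero.mp (le_antisymm this (abs_nonneg _))

omit hz hTcard hTmax in
/-- Lower bound for the B-functional over a k-superset of the support. -/
lemma B_lower (x : EuclideanSpace ℝ (Fin n)) (S : Finset (Fin n)) (hScard : S.card = k)
    (hsupp : ∀ i ∉ S, x i = 0) :
    ‖coordRestrict z S‖ ^ 2 + (gauge (CH n k) (coordRestrict z Sᶜ)) ^ 2
      ≤ (gauge (CH n k) (x + z)) ^ 2 - ‖x‖ ^ 2 - 2 * ⟪x, z⟫ := by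
  have hA := lemA hk hkn S (le_of_eq hScard) (x + z)
  have h1 : coordRestrict (x + z) Sᶜ = coordRestrict z Sᶜ := by
    ext i
    rw [coordRestrict_apply, coordRestrict_apply]
    by_cases hi : i ∈ Sᶜ
    · rw [if_pos hi, if_pos hi, PiLp.add_apply, hsupp i (Finset.mem_compl.mp hi), zero_add]
    · rw [if_neg hi, if_neg hi]
  have h2 : coordRestrict (x + z) S = x + coordRestrict z S := by
    ext i
    have : (x + coordRestrict z S) i = x i + coordRestrict z S i := rfl
    rw [this, coordRestrict_apply, coordRestrict_apply]
    by_cases hi : i ∈ S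
    · rw [if_pos hi, if_pos hi]; rfl
    · rw [if_neg hi, if_neg hi, add_zero]
      exact (hsupp i hi).symm
  have h3 : ⟪x, coordRestrict z S⟫ = ⟪x, z⟫ := by
    rw [inner_eq, inner_eq]
    refine Finset.sum_congr rfl fun i _ => ?_
    rw [coordRestrict_apply]
    by_cases hi : i ∈ S
    · rw [if_pos hi]
    · rw [if_neg hi, hsupp i hi, zero_mul, zero_mul]
  rw [h1, h2] at hA
  rw [norm_add_sq_real, h3] at hA
  linarith

omit hTcard hTmax hz in
lemma B_pos (x : EuclideanSpace ℝ (Fin n)) (hx : x ∈ sparseVecs n k \ {0}) (hzz : z ≠ 0) :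
    0 < (gauge (CH n k) (x + z)) ^ 2 - ‖x‖ ^ 2 - 2 * ⟪x, z⟫ := by
  obtain ⟨⟨s, hs, hsupp⟩, _⟩ := hx
  obtain ⟨S, hsS, _, hScard⟩ := Finset.exists_subsuperset_card_eq (Finset.subset_univ s) hs
    (by simpa using hkn)
  have hsupp' : ∀ i ∉ S, x i = 0 := fun i hi => hsupp i (fun h => hi (hsS h))
  have hlow := B_lower hk hkn z x S hScard hsupp'
  have hz2 : ‖coordRestrict z S‖ ^ 2 + ‖coordRestrict z Sᶜ‖ ^ 2
      ≤ ‖coordRestrict z S‖ ^ 2 + (gauge (CH n k) (coordRestrict z Sᶜ)) ^ 2 := by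
    have := norm_le_gauge hk hkn (coordRestrict z Sᶜ)
    nlinarith [norm_nonneg (coordRestrict z Sᶜ)]
  rw [coordRestrict_pythagoras] at hz2
  have hzn : ‖z‖ ≠ 0 := norm_ne_zero_iff.mpr hzz
  have : (0:ℝ) < ‖z‖ ^ 2 := by positivity
  linarith

/-- Part 1 of the proposition. -/
lemma part1_sSup :
    sSup {r : ℝ | ∃ x ∈ sparseVecs n k \ {0},
        r = -⟪x, z⟫ /
          (‖x‖ * Real.sqrt ((gauge (CH n k) (x + z)) ^ 2 - ‖x‖ ^ 2 - 2 * ⟪x, z⟫))}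
      = 1 / Real.sqrt
          ((gauge (CH n k) (coordRestrict z Tᶜ)) ^ 2 / ‖coordRestrict z T‖ ^ 2 + 1) := by
  set a := ‖coordRestrict z T‖ with hadef
  set b := gauge (CH n k) (coordRestrict z Tᶜ) with hbdef
  have ha : 0 < a := zT_pos hk hkn z hz T hTcard hTmax
  have hb : 0 ≤ b := gauge_nonneg _
  have hab : 0 < a ^ 2 + b ^ 2 := by positivity
  have hsab : 0 < Real.sqrt (a ^ 2 + b ^ 2) := Real.sqrt_pos.mpr hab
  set val := a / Real.sqrt (a ^ 2 + b ^ 2) with hval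
  have hvalpos : 0 < val := div_pos ha hsab
  -- RHS identity
  have hRHS : 1 / Real.sqrt (b ^ 2 / a ^ 2 + 1) = val := by
    have e1 : b ^ 2 / a ^ 2 + 1 = (a ^ 2 + b ^ 2) / a ^ 2 := by
      field_simp
      ring
    rw [e1, Real.sqrt_div hab.le, Real.sqrt_sq ha.le, one_div_div]
  rw [hRHS]
  -- the witness x₀ = -z_T
  set x₀ : EuclideanSpace ℝ (Fin n) := -coordRestrict z T with hx₀
  have hx₀sparse : x₀ ∈ sparseVecs n k := by
    refine ⟨T, le_of_eq hTcard, fun i hi => ?_⟩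
    have : x₀ i = -(coordRestrict z T i) := rfl
    rw [this, coordRestrict_apply, if_neg hi, neg_zero]
  have hx₀ne : x₀ ≠ 0 := by
    rw [hx₀, neg_ne_zero]
    intro h
    rw [hadef, h] at ha
    simp at ha
  have hx₀z : x₀ + z = coordRestrict z Tᶜ := by
    ext i
    have : (x₀ + z) i = -(coordRestrict z T i) + z i := rfl
    rw [this, coordRestrict_apply, coordRestrict_apply]
    by_cases hi : i ∈ T
    · rw [if_pos hi, if_neg (fun h => (Finset.mem_compl.mp h) hi), neg_add_cancel]
    · rw [if_neg hi, if_pos (Finset.mem_compl.mpr hi), neg_zero, zero_add]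
  have hx₀inner : ⟪x₀, z⟫ = -(a ^ 2) := by
    rw [inner_eq, hadef, coordRestrict_normsq]
    have e : ∀ i, x₀ i * z i = -(if i ∈ T then z i ^ 2 else 0) := by
      intro i
      have : x₀ i = -(coordRestrict z T i) := rfl
      rw [this, coordRestrict_apply]
      by_cases hi : i ∈ T
      · rw [if_pos hi, if_pos hi]; ring
      · rw [if_neg hi, if_neg hi]; ring
    rw [Finset.sum_congr rfl (fun i _ => e i), Finset.sum_neg_distrib, neg_inj,
      Finset.sum_ite_mem, Finset.univ_inter]
  have hx₀norm : ‖x₀‖ = a := by rw [hx₀, norm_neg]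
  have hx₀B : (gauge (CH n k) (x₀ + z)) ^ 2 - ‖x₀‖ ^ 2 - 2 * ⟪x₀, z⟫ = a ^ 2 + b ^ 2 := by
    rw [hx₀z, hx₀inner, hx₀norm, ← hbdef]
    ring
  have hx₀val : -⟪x₀, z⟫ /
      (‖x₀‖ * Real.sqrt ((gauge (CH n k) (x₀ + z)) ^ 2 - ‖x₀‖ ^ 2 - 2 * ⟪x₀, z⟫)) = val := by
    rw [hx₀B, hx₀inner, hx₀norm, neg_neg, hval]
    set s := Real.sqrt (a ^ 2 + b ^ 2)
    rw [sq, mul_div_mul_left _ _ ha.ne']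
  have hmem : val ∈ {r : ℝ | ∃ x ∈ sparseVecs n k \ {0},
      r = -⟪x, z⟫ /
        (‖x‖ * Real.sqrt ((gauge (CH n k) (x + z)) ^ 2 - ‖x‖ ^ 2 - 2 * ⟪x, z⟫))} :=
    ⟨x₀, ⟨hx₀sparse, hx₀ne⟩, hx₀val.symm⟩
  -- upper bound
  have hub : ∀ r ∈ {r : ℝ | ∃ x ∈ sparseVecs n k \ {0},
      r = -⟪x, z⟫ /
        (‖x‖ * Real.sqrt ((gauge (CH n k) (x + z)) ^ 2 - ‖x‖ ^ 2 - 2 * ⟪x, z⟫))}, r ≤ val := by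
    rintro r ⟨x, hx, rfl⟩
    set B := (gauge (CH n k) (x + z)) ^ 2 - ‖x‖ ^ 2 - 2 * ⟪x, z⟫ with hBdef
    have hBpos : 0 < B := B_pos hk hkn z x hx hz
    have hxn : 0 < ‖x‖ := norm_pos_iff.mpr hx.2
    have hsB : 0 < Real.sqrt B := Real.sqrt_pos.mpr hBpos
    rcases le_or_gt (-⟪x, z⟫) 0 with hp | hp
    · refine le_trans (div_nonpos_of_nonpos_of_nonneg hp (by positivity)) hvalpos.le
    · obtain ⟨⟨s, hs, hsupp⟩, hxne⟩ := hx
      obtain ⟨S, hsS, _, hScard⟩ := Finset.exists_subsuperset_card_eq (Finset.subset_univ s) hs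
        (by simpa using hkn)
      have hsupp' : ∀ i ∉ S, x i = 0 := fun i hi => hsupp i (fun h => hi (hsS h))
      set c := ‖coordRestrict z S‖ with hcdef
      set d := gauge (CH n k) (coordRestrict z Sᶜ) with hddef
      have hd : 0 ≤ d := gauge_nonneg _
      have hBc : c ^ 2 + d ^ 2 ≤ B := B_lower hk hkn z x S hScard hsupp'
      -- Cauchy-Schwarz bound on p
      have hinner : ⟪x, coordRestrict z S⟫ = ⟪x, z⟫ := by
        rw [inner_eq, inner_eq]
        refine Finset.sum_congr rfl fun i _ => ?_
        rw [coordRestrict_apply]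
        by_cases hi : i ∈ S
        · rw [if_pos hi]
        · rw [if_neg hi, hsupp' i hi, zero_mul, zero_mul]
      have hpc : -⟪x, z⟫ ≤ ‖x‖ * c := by
        rw [← hinner]
        calc -⟪x, coordRestrict z S⟫ ≤ |⟪x, coordRestrict z S⟫| := neg_le_abs _
        _ ≤ ‖x‖ * ‖coordRestrict z S‖ := abs_real_inner_le_norm _ _
      have hc : 0 < c := by
        by_contra hcn
        push_neg at hcn
        have : c = 0 := le_antisymm hcn (norm_nonneg _)
        rw [this, mul_zero] at hpc
        linarith
      have hcd : 0 < c ^ 2 + d ^ 2 := by positivity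
      -- minimality of T
      obtain ⟨hca, hbd⟩ := swap_induction hk hkn z T hTcard hTmax S hScard
      rw [← hcdef, ← hadef] at hca
      rw [← hbdef, ← hddef] at hbd
      -- chain of bounds
      have step1 : -⟪x, z⟫ / (‖x‖ * Real.sqrt B) ≤ (‖x‖ * c) / (‖x‖ * Real.sqrt B) :=
        (div_le_div_iff_of_pos_right (by positivity)).mpr hpc
      have step2 : (‖x‖ * c) / (‖x‖ * Real.sqrt B) = c / Real.sqrt B :=
        mul_div_mul_left _ _ hxn.ne'
      have step3 : c / Real.sqrt B ≤ c / Real.sqrt (c ^ 2 + d ^ 2) :=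
        div_le_div_of_nonneg_left hc.le (Real.sqrt_pos.mpr hcd) (Real.sqrt_le_sqrt hBc)
      have step4 : c / Real.sqrt (c ^ 2 + d ^ 2) ≤ val := by
        rw [hval, div_le_div_iff₀ (Real.sqrt_pos.mpr hcd) hsab]
        have lhs_sq : (c * Real.sqrt (a ^ 2 + b ^ 2)) ^ 2 = c ^ 2 * (a ^ 2 + b ^ 2) := by
          rw [mul_pow, Real.sq_sqrt hab.le]
        have rhs_sq : (a * Real.sqrt (c ^ 2 + d ^ 2)) ^ 2 = a ^ 2 * (c ^ 2 + d ^ 2) := by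
          rw [mul_pow, Real.sq_sqrt hcd.le]
        have hsq : (c * Real.sqrt (a ^ 2 + b ^ 2)) ^ 2 ≤ (a * Real.sqrt (c ^ 2 + d ^ 2)) ^ 2 := by
          rw [lhs_sq, rhs_sq]
          have key : (c * b) ^ 2 ≤ (a * d) ^ 2 :=
            pow_le_pow_left₀ (by positivity)
              (mul_le_mul hca hbd hb (le_of_lt (lt_of_lt_of_le hc hca))) 2
          rw [mul_pow, mul_pow] at key
          have e1 : c ^ 2 * (a ^ 2 + b ^ 2) = c ^ 2 * a ^ 2 + c ^ 2 * b ^ 2 := by ring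
          have e2 : a ^ 2 * (c ^ 2 + d ^ 2) = a ^ 2 * c ^ 2 + a ^ 2 * d ^ 2 := by ring
          rw [e1, e2]
          have e3 : c ^ 2 * a ^ 2 = a ^ 2 * c ^ 2 := by ring
          linarith
        have h1 : 0 ≤ c * Real.sqrt (a ^ 2 + b ^ 2) := by positivity
        have h2 : 0 ≤ a * Real.sqrt (c ^ 2 + d ^ 2) := by positivity
        calc c * Real.sqrt (a ^ 2 + b ^ 2)
            = Real.sqrt ((c * Real.sqrt (a ^ 2 + b ^ 2)) ^ 2) := (Real.sqrt_sq h1).symm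
        _ ≤ Real.sqrt ((a * Real.sqrt (c ^ 2 + d ^ 2)) ^ 2) := Real.sqrt_le_sqrt hsq
        _ = a * Real.sqrt (c ^ 2 + d ^ 2) := Real.sqrt_sq h2
      calc -⟪x, z⟫ / (‖x‖ * Real.sqrt B) ≤ (‖x‖ * c) / (‖x‖ * Real.sqrt B) := step1
      _ = c / Real.sqrt B := step2
      _ ≤ c / Real.sqrt (c ^ 2 + d ^ 2) := step3
      _ ≤ val := step4
  exact le_antisymm (csSup_le ⟨val, hmem⟩ hub) (le_csSup ⟨val, hub⟩ hmem)
end Part1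


lemma gauge_le_l1 (hk : 1 ≤ k) (hkn : k ≤ n) (z : EuclideanSpace ℝ (Fin n)) :
    gauge (CH n k) z ≤ ∑ i, |z i| := by
  set y : Fin n → EuclideanSpace ℝ (Fin n) := fun i => EuclideanSpace.single i (z i) with hy
  have hsum : ∑ i, y i = z := by
    ext j
    rw [WithLp.ofLp_sum, Fintype.sum_apply]
    simp [hy, EuclideanSpace.single_apply]
  have hsparse : ∀ i ∈ Finset.univ, y i ∈ sparseVecs n k := by
    intro i _
    refine ⟨{i}, by simpa using hk, fun j hj => ?_⟩
    simp only [Finset.mem_singleton] at hj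
    simp [hy, EuclideanSpace.single_apply, hj]
  have := gauge_sum_le hk hkn Finset.univ y hsparse
  rw [hsum] at this
  refine this.trans (le_of_eq ?_)
  exact Finset.sum_congr rfl fun i _ => by simp [hy, EuclideanSpace.norm_single]

/-- D(z) is uniformly bounded by n², for any valid choice of T. -/
lemma D_bounded (hk : 1 ≤ k) (hkn : k ≤ n) (z : EuclideanSpace ℝ (Fin n)) (hz : z ≠ 0)
    (T : Finset (Fin n)) (hTcard : T.card = k)
    (hTmax : ∀ i ∈ T, ∀ j ∉ T, |z j| ≤ |z i|) :
    (gauge (CH n k) (coordRestrict z Tᶜ)) ^ 2 / ‖coordRestrict z T‖ ^ 2 ≤ (n:ℝ) ^ 2 := by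
  set a := ‖coordRestrict z T‖ with hadef
  have ha : 0 < a := zT_pos hk hkn z hz T hTcard hTmax
  set b := gauge (CH n k) (coordRestrict z Tᶜ) with hbdef
  have hb : 0 ≤ b := gauge_nonneg _
  rw [div_le_iff₀ (by positivity)]
  -- b ≤ ∑|z i|
  have hb1 : b ≤ ∑ i, |z i| := by
    refine (gauge_le_l1 hk hkn _).trans ?_
    refine Finset.sum_le_sum fun i _ => ?_
    rw [coordRestrict_apply]
    split
    · exact le_refl _
    · simp
  have hl1 : (∑ i, |z i|) ^ 2 ≤ (n:ℝ) * ‖z‖ ^ 2 := by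
    rw [norm_sq_eq]
    calc (∑ i, |z i|) ^ 2 = (∑ i, 1 * |z i|) ^ 2 := by simp
    _ ≤ (∑ _i : Fin n, (1:ℝ) ^ 2) * ∑ i, |z i| ^ 2 :=
        Finset.sum_mul_sq_le_sq_mul_sq Finset.univ (fun _ => (1:ℝ)) (fun i => |z i|)
    _ = (n:ℝ) * ∑ i, z i ^ 2 := by
        simp [sq_abs, Finset.card_univ]
  -- ‖z‖² ≤ n a²
  have hTne : T.Nonempty := Finset.card_pos.mp (by omega)
  obtain ⟨i0, hi0, hmax⟩ := Finset.exists_max_image T (fun i => |z i|) hTne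
  have hall : ∀ j, z j ^ 2 ≤ z i0 ^ 2 := by
    intro j
    rw [← sq_abs (z j), ← sq_abs (z i0)]
    by_cases hj : j ∈ T
    · exact pow_le_pow_left₀ (abs_nonneg _) (hmax j hj) 2
    · exact pow_le_pow_left₀ (abs_nonneg _) (hTmax i0 hi0 j hj) 2
  have hz2 : ‖z‖ ^ 2 ≤ (n:ℝ) * a ^ 2 := by
    rw [norm_sq_eq]
    calc ∑ j, z j ^ 2 ≤ ∑ _j : Fin n, z i0 ^ 2 := Finset.sum_le_sum fun j _ => hall j
    _ = (n:ℝ) * z i0 ^ 2 := by simp [Finset.sum_const, Finset.card_univ, nsmul_eq_mul]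
    _ ≤ (n:ℝ) * a ^ 2 := by
        refine mul_le_mul_of_nonneg_left ?_ (Nat.cast_nonneg n)
        rw [hadef, coordRestrict_normsq]
        exact Finset.single_le_sum (fun i _ => sq_nonneg (z i)) hi0
  calc b ^ 2 ≤ (∑ i, |z i|) ^ 2 := pow_le_pow_left₀ hb hb1 2
  _ ≤ (n:ℝ) * ‖z‖ ^ 2 := hl1
  _ ≤ (n:ℝ) * ((n:ℝ) * a ^ 2) := mul_le_mul_of_nonneg_left hz2 (Nat.cast_nonneg n)
  _ = (n:ℝ) ^ 2 * a ^ 2 := by ring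


lemma part2 (hk : 1 ≤ k) (hkn : k ≤ n)
    (T : EuclideanSpace ℝ (Fin n) → Finset (Fin n))
    (hT : ∀ z, (T z).card = k ∧ ∀ i ∈ T z, ∀ j ∉ T z, |z j| ≤ |z i|)
    (R : EuclideanSpace ℝ (Fin n) → ℝ)
    (hhom : ∀ (c : ℝ) (x : EuclideanSpace ℝ (Fin n)), R (c • x) = |c| * R x) :
    sInf {s : ℝ | ∃ z ∈ descentConeSet R (sparseVecs n k) \ {0},
        s = sSup {r : ℝ | ∃ x ∈ sparseVecs n k \ {0},
          r = -⟪x, z⟫ /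
            (‖x‖ * Real.sqrt ((gauge (CH n k) (x + z)) ^ 2 - ‖x‖ ^ 2 - 2 * ⟪x, z⟫))}}
      = 1 / Real.sqrt
          (sSup {d : ℝ | ∃ z ∈ descentConeSet R (sparseVecs n k) \ {0},
            d = (gauge (CH n k) (coordRestrict z (T z)ᶜ)) ^ 2 /
              ‖coordRestrict z (T z)‖ ^ 2} + 1) := by
  classical
  set D : EuclideanSpace ℝ (Fin n) → ℝ := fun z =>
    (gauge (CH n k) (coordRestrict z (T z)ᶜ)) ^ 2 / ‖coordRestrict z (T z)‖ ^ 2 with hD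
  set 𝒟 : Set ℝ := {d : ℝ | ∃ z ∈ descentConeSet R (sparseVecs n k) \ {0}, d = D z} with h𝒟
  set f : ℝ → ℝ := fun d => 1 / Real.sqrt (max d 0 + 1) with hf
  have hfant : Antitone f := by
    intro d₁ d₂ hle
    have h1 : (0:ℝ) < Real.sqrt (max d₁ 0 + 1) := by
      refine Real.sqrt_pos.mpr ?_
      have := le_max_right d₁ 0
      linarith
    refine one_div_le_one_div_of_le h1 ?_
    refine Real.sqrt_le_sqrt ?_
    have := max_le_max hle (le_refl (0:ℝ))
    linarith
  have hfcont : Continuous f := by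
    refine continuous_const.div ?_ ?_
    · exact Real.continuous_sqrt.comp ((continuous_id.max continuous_const).add continuous_const)
    · intro x
      refine (Real.sqrt_pos.mpr ?_).ne'
      have := le_max_right x 0
      linarith
  -- nonemptiness
  have hn0 : 0 < n := by omega
  set i0 : Fin n := ⟨0, hn0⟩
  set a₀ : EuclideanSpace ℝ (Fin n) := EuclideanSpace.single i0 (1:ℝ) with ha₀
  have ha₀sparse : a₀ ∈ sparseVecs n k := by
    refine ⟨{i0}, by simpa using hk, fun i hi => ?_⟩
    simp only [Finset.mem_singleton] at hi
    simp [ha₀, EuclideanSpace.single_apply, hi]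
  set z₀ : EuclideanSpace ℝ (Fin n) := (-2 : ℝ) • a₀ with hz₀
  have hz₀ne : z₀ ≠ 0 := by
    intro h
    have := congrArg (fun v : EuclideanSpace ℝ (Fin n) => v i0) h
    simp only at this
    rw [hz₀] at this
    simp [PiLp.smul_apply, ha₀, EuclideanSpace.single_apply] at this
  have hz₀mem : z₀ ∈ descentConeSet R (sparseVecs n k) := by
    have hsum : a₀ + z₀ = (-1 : ℝ) • a₀ := by
      ext i
      have : (a₀ + z₀) i = a₀ i + (-2 : ℝ) * a₀ i := rfl
      rw [this]
      have : ((-1 : ℝ) • a₀) i = (-1 : ℝ) * a₀ i := rfl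
      rw [this]
      ring
    have hcone : z₀ ∈ descentCone R a₀ := by
      show R (a₀ + z₀) ≤ R a₀
      rw [hsum, hhom]
      norm_num
    exact Set.mem_biUnion ha₀sparse hcone
  have hd₀mem : D z₀ ∈ 𝒟 := ⟨z₀, ⟨hz₀mem, hz₀ne⟩, rfl⟩
  have hne : 𝒟.Nonempty := ⟨D z₀, hd₀mem⟩
  have hDnonneg : ∀ z, 0 ≤ D z := fun z => by
    rw [hD]; positivity
  have hbdd : BddAbove 𝒟 := by
    refine ⟨(n:ℝ) ^ 2, ?_⟩
    rintro d ⟨z, ⟨hzmem, hzne⟩, rfl⟩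
    exact D_bounded hk hkn z (by simpa using hzne) (T z) (hT z).1 (hT z).2
  -- image description
  have himg : {s : ℝ | ∃ z ∈ descentConeSet R (sparseVecs n k) \ {0},
      s = sSup {r : ℝ | ∃ x ∈ sparseVecs n k \ {0},
        r = -⟪x, z⟫ /
          (‖x‖ * Real.sqrt ((gauge (CH n k) (x + z)) ^ 2 - ‖x‖ ^ 2 - 2 * ⟪x, z⟫))}}
      = f '' 𝒟 := by
    ext s
    constructor
    · rintro ⟨z, hzmem, rfl⟩
      have hzne : z ≠ 0 := by simpa using hzmem.2
      refine ⟨D z, ⟨z, hzmem, rfl⟩, ?_⟩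
      rw [hf]
      simp only
      rw [max_eq_left (hDnonneg z)]
      exact (part1_sSup hk hkn z hzne (T z) (hT z).1 (hT z).2).symm
    · rintro ⟨d, ⟨z, hzmem, rfl⟩, rfl⟩
      have hzne : z ≠ 0 := by simpa using hzmem.2
      refine ⟨z, hzmem, ?_⟩
      rw [part1_sSup hk hkn z hzne (T z) (hT z).1 (hT z).2, hf]
      simp only
      rw [max_eq_left (hDnonneg z)]
  rw [himg]
  rw [← hfant.map_csSup_of_continuousAt hfcont.continuousAt hne hbdd]
  have h0s : 0 ≤ sSup 𝒟 := le_trans (hDnonneg z₀) (le_csSup hbdd hd₀mem)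
  rw [hf]
  simp only
  rw [max_eq_left h0s]

end SigmaAux

/-- Proposition 1 of the paper, characterization of the sufficient RIP constant
`δ_Σ^{suff}(R)`. `T` picks, for each `z`, `k` indices carrying the `k` largest absolute values
of coordinates of `z`. -/
theorem deltaSuff_characterization
    (n k : ℕ) (hk : 1 ≤ k) (hkn : k ≤ n)
    (T : EuclideanSpace ℝ (Fin n) → Finset (Fin n))
    (hT : ∀ z, (T z).card = k ∧ ∀ i ∈ T z, ∀ j ∉ T z, |z j| ≤ |z i|) :
    (∀ z : EuclideanSpace ℝ (Fin n), z ≠ 0 →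
      (∀ x ∈ sparseVecs n k \ {0},
        0 < (atomNormSigma n k (x + z)) ^ 2 - ‖x‖ ^ 2 - 2 * ⟪x, z⟫) ∧
      sSup {r : ℝ | ∃ x ∈ sparseVecs n k \ {0},
          r = -⟪x, z⟫ /
            (‖x‖ * Real.sqrt ((atomNormSigma n k (x + z)) ^ 2 - ‖x‖ ^ 2 - 2 * ⟪x, z⟫))}
        = 1 / Real.sqrt
            ((atomNormSigma n k (coordRestrict z (T z)ᶜ)) ^ 2 / ‖coordRestrict z (T z)‖ ^ 2 + 1))
    ∧ ∀ R : EuclideanSpace ℝ (Fin n) → ℝ,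
        (∀ (c : ℝ) (x : EuclideanSpace ℝ (Fin n)), R (c • x) = |c| * R x) →
        (∀ x y, R (x + y) ≤ R x + R y) →
        (∀ x, R x = 0 → x = 0) →
        sInf {s : ℝ | ∃ z ∈ descentConeSet R (sparseVecs n k) \ {0},
            s = sSup {r : ℝ | ∃ x ∈ sparseVecs n k \ {0},
              r = -⟪x, z⟫ /
                (‖x‖ * Real.sqrt ((atomNormSigma n k (x + z)) ^ 2 - ‖x‖ ^ 2 - 2 * ⟪x, z⟫))}}
          = 1 / Real.sqrt
              (sSup {d : ℝ | ∃ z ∈ descentConeSet R (sparseVecs n k) \ {0},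
                d = (atomNormSigma n k (coordRestrict z (T z)ᶜ)) ^ 2 /
                  ‖coordRestrict z (T z)‖ ^ 2} + 1) := by
  classical
  have hg : atomNormSigma n k = gauge (SigmaAux.CH n k) := rfl
  constructor
  · intro z hz
    refine ⟨fun x hx => ?_, ?_⟩
    · rw [hg]
      exact SigmaAux.B_pos hk hkn z x hx hz
    · rw [hg]
      exact SigmaAux.part1_sSup hk hkn z hz (T z) (hT z).1 (hT z).2
  · intro R h1 h2 h3
    rw [hg]
    exact SigmaAux.part2 hk hkn T hT R h1

end
end

section
/- Let k ≥ 1 and n ≥ 2k+1, and let Σ_k be the set of k-sparse vectors of ℝⁿ. Then the ℓ¹-norm is the unique maximizer of A_Σ^{RIP,suff}(R) := (D_Σ(R) + 1)^{−1/2} over the class of weighted ℓ¹-norms: D_Σ(‖·‖₁) = 1, and for every weight vector w ∈ ℝⁿ with w_i > 0 for all i, max_i w_i = 1 and w ≠ (1,…,1), one has D_Σ(‖·‖_w) > 1, i.e. A_Σ^{RIP,suff}(‖·‖_w) < A_Σ^{RIP,suff}(‖·‖₁). -/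
open scoped BigOperators ENNReal RealInnerProductSpace
open MeasureTheory Metric

noncomputable section

/-- `D_Σ(R)`, where `T` selects for each `z` a set of `k` indices carrying the `k` largest
absolute values of coordinates of `z`. -/
def Dsigma (n k : ℕ) (T : EuclideanSpace ℝ (Fin n) → Finset (Fin n))
    (R : EuclideanSpace ℝ (Fin n) → ℝ) : ℝ :=
  sSup {r : ℝ | ∃ z ∈ descentConeSet R (sparseVecs n k) \ {0},
    r = (atomNormSigma n k (coordRestrict z (T z)ᶜ)) ^ 2 / ‖coordRestrict z (T z)‖ ^ 2}

open scoped Pointwise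

namespace L1Aux

variable {n k : ℕ}

/-- dominance sum comparison -/
lemma sum_le_sum_of_dom {f : Fin n → ℝ} (hf : ∀ i, 0 ≤ f i) {S T : Finset (Fin n)}
    (hcard : S.card ≤ T.card) (hdom : ∀ i ∉ T, ∀ l ∈ T, f i ≤ f l) :
    ∑ i ∈ S, f i ≤ ∑ i ∈ T, f i := by
  have hS : ∑ i ∈ S ∩ T, f i + ∑ i ∈ S \ T, f i = ∑ i ∈ S, f i :=
    Finset.sum_inter_add_sum_sdiff S T f
  have hT2 : ∑ i ∈ T ∩ S, f i + ∑ i ∈ T \ S, f i = ∑ i ∈ T, f i :=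
    Finset.sum_inter_add_sum_sdiff T S f
  have hint : ∑ i ∈ S ∩ T, f i = ∑ i ∈ T ∩ S, f i := by rw [Finset.inter_comm]
  have hkey : ∑ i ∈ S \ T, f i ≤ ∑ i ∈ T \ S, f i := by
    rcases (S \ T).eq_empty_or_nonempty with he | hne
    · rw [he]; simpa using Finset.sum_nonneg fun i _ => hf i
    · have hc1 : (S \ T).card + (S ∩ T).card = S.card := Finset.card_sdiff_add_card_inter S T
      have hc2 : (T \ S).card + (T ∩ S).card = T.card := Finset.card_sdiff_add_card_inter T S
      have hcc : (S ∩ T).card = (T ∩ S).card := by rw [Finset.inter_comm]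
      have hcard' : (S \ T).card ≤ (T \ S).card := by omega
      obtain ⟨l0, hl0, hmin⟩ := (T \ S).exists_min_image f (by
        refine Finset.card_pos.mp ?_
        have := Finset.card_pos.mpr hne
        omega)
      have hl0T : l0 ∈ T := (Finset.mem_sdiff.mp hl0).1
      calc ∑ i ∈ S \ T, f i ≤ (S \ T).card • f l0 :=
            Finset.sum_le_card_nsmul _ _ _ fun i hi =>
              hdom i (Finset.mem_sdiff.mp hi).2 l0 hl0T
        _ ≤ (T \ S).card • f l0 := nsmul_le_nsmul_left (hf l0) hcard'
        _ ≤ ∑ i ∈ T \ S, f i := Finset.card_nsmul_le_sum _ _ _ fun i hi => hmin i hi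
  linarith

lemma descent_fwd {w : Fin n → ℝ} (hw : ∀ i, 0 ≤ w i) {z : EuclideanSpace ℝ (Fin n)}
    (hz : z ∈ descentConeSet (wNorm w) (sparseVecs n k)) :
    ∃ S : Finset (Fin n), S.card ≤ k ∧ ∑ i ∈ Sᶜ, w i * |z i| ≤ ∑ i ∈ S, w i * |z i| := by
  obtain ⟨x, hx, hzx⟩ := Set.mem_iUnion₂.mp hz
  obtain ⟨s, hs, hsupp⟩ := hx
  refine ⟨s, hs, ?_⟩
  have hd : wNorm w (x + z) ≤ wNorm w x := hzx
  have hx1 : wNorm w x = ∑ i ∈ s, w i * |x i| := by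
    rw [wNorm, ← Finset.sum_add_sum_compl s]
    have : ∑ i ∈ sᶜ, w i * |x i| = 0 := by
      refine Finset.sum_eq_zero fun i hi => ?_
      rw [hsupp i (Finset.mem_compl.mp hi)]; simp
    rw [this, add_zero]
  have hx2 : wNorm w (x + z) =
      ∑ i ∈ s, w i * |x i + z i| + ∑ i ∈ sᶜ, w i * |z i| := by
    have e1 : wNorm w (x + z) = ∑ i ∈ s, w i * |x i + z i| + ∑ i ∈ sᶜ, w i * |x i + z i| :=
      (Finset.sum_add_sum_compl s fun i => w i * |x i + z i|).symm
    rw [e1]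
    congr 1
    refine Finset.sum_congr rfl fun i hi => ?_
    rw [hsupp i (Finset.mem_compl.mp hi), zero_add]
  have hlow : ∑ i ∈ s, (w i * |x i| - w i * |z i|) ≤ ∑ i ∈ s, w i * |x i + z i| := by
    refine Finset.sum_le_sum fun i _ => ?_
    have habs : |x i| - |z i| ≤ |x i + z i| := by
      have h := abs_add_le (x i + z i) (-(z i))
      simp only [add_neg_cancel_right, abs_neg] at h
      linarith
    nlinarith [hw i, abs_nonneg (z i), abs_nonneg (x i + z i)]
  rw [Finset.sum_sub_distrib] at hlow
  rw [hx1, hx2] at hd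
  linarith

lemma descent_bwd {w : Fin n → ℝ} {z : EuclideanSpace ℝ (Fin n)} (S : Finset (Fin n))
    (hS : S.card ≤ k)
    (h : ∑ i ∈ Sᶜ, w i * |z i| ≤ ∑ i ∈ S, w i * |z i|) :
    z ∈ descentConeSet (wNorm w) (sparseVecs n k) := by
  refine Set.mem_iUnion₂.mpr ⟨-(coordRestrict z S), ⟨S, hS, fun i hi => ?_⟩, ?_⟩
  · show -(if i ∈ S then z i else 0) = 0
    rw [if_neg hi, neg_zero]
  · show wNorm w (-(coordRestrict z S) + z) ≤ wNorm w (-(coordRestrict z S))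
    have h1 : wNorm w (-(coordRestrict z S) + z) = ∑ i ∈ Sᶜ, w i * |z i| := by
      rw [wNorm, ← Finset.sum_add_sum_compl S]
      have hz1 : ∑ i ∈ S, w i * |(-(coordRestrict z S) + z) i| = 0 := by
        refine Finset.sum_eq_zero fun i hi => ?_
        have : (-(coordRestrict z S) + z) i = 0 := by
          show -(if i ∈ S then z i else 0) + z i = 0
          rw [if_pos hi]; ring
        rw [this]; simp
      rw [hz1, zero_add]
      refine Finset.sum_congr rfl fun i hi => ?_
      have : (-(coordRestrict z S) + z) i = z i := by
        show -(if i ∈ S then z i else 0) + z i = z i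
        rw [if_neg (Finset.mem_compl.mp hi)]; ring
      rw [this]
    have h2 : wNorm w (-(coordRestrict z S)) = ∑ i ∈ S, w i * |z i| := by
      rw [wNorm, ← Finset.sum_add_sum_compl S]
      have hz2 : ∑ i ∈ Sᶜ, w i * |(-(coordRestrict z S)) i| = 0 := by
        refine Finset.sum_eq_zero fun i hi => ?_
        have : (-(coordRestrict z S)) i = 0 := by
          show -(if i ∈ S then z i else 0) = 0
          rw [if_neg (Finset.mem_compl.mp hi), neg_zero]
        rw [this]; simp
      rw [hz2, add_zero]
      refine Finset.sum_congr rfl fun i hi => ?_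
      have : (-(coordRestrict z S)) i = -(z i) := by
        show -(if i ∈ S then z i else 0) = -(z i)
        rw [if_pos hi]
      rw [this, abs_neg]
    rw [h1, h2]; exact h

def AtomSet (n k : ℕ) : Set (EuclideanSpace ℝ (Fin n)) :=
  {u | u ∈ sparseVecs n k ∧ ‖u‖ = 1}

lemma atomNorm_eq (v : EuclideanSpace ℝ (Fin n)) :
    atomNormSigma n k v = gauge (convexHull ℝ (AtomSet n k)) v := rfl

lemma single_mem_atom (hk : 1 ≤ k) (i : Fin n) (c : ℝ) (hc : |c| = 1) :
    EuclideanSpace.single i c ∈ AtomSet n k := by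
  constructor
  · exact ⟨{i}, by simpa using hk, fun j hj => by
      rw [EuclideanSpace.single_apply, if_neg (by simpa using hj)]⟩
  · rw [EuclideanSpace.norm_single, Real.norm_eq_abs, hc]

lemma neg_mem_atom {u : EuclideanSpace ℝ (Fin n)} (hu : u ∈ AtomSet n k) :
    -u ∈ AtomSet n k := by
  obtain ⟨⟨s, hs, h0⟩, hnorm⟩ := hu
  exact ⟨⟨s, hs, fun i hi => by show -(u i) = 0; rw [h0 i hi, neg_zero]⟩,
    by rw [norm_neg, hnorm]⟩

lemma zero_mem_C (hk : 1 ≤ k) (hn : 0 < n) :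
    (0 : EuclideanSpace ℝ (Fin n)) ∈ convexHull ℝ (AtomSet n k) := by
  set i0 : Fin n := ⟨0, hn⟩
  have h1 : EuclideanSpace.single i0 (1:ℝ) ∈ AtomSet n k :=
    single_mem_atom hk i0 1 (by norm_num)
  have h2 := neg_mem_atom h1
  have := (convex_convexHull ℝ (AtomSet n k))
    (subset_convexHull ℝ _ h1) (subset_convexHull ℝ _ h2)
    (a := 1/2) (b := 1/2) (by norm_num) (by norm_num) (by norm_num)
  rwa [smul_neg, add_neg_cancel] at this

lemma smul_C_mono {C : Set (EuclideanSpace ℝ (Fin n))} (hC : Convex ℝ C)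
    (h0 : (0 : EuclideanSpace ℝ (Fin n)) ∈ C) {r r' : ℝ} (hr : 0 ≤ r) (hrr' : r ≤ r') :
    r • C ⊆ r' • C := by
  intro x hx
  obtain ⟨c, hc, rfl⟩ := hx
  rcases eq_or_lt_of_le (hr.trans hrr') with h0' | hpos
  · have hr0 : r = 0 := le_antisymm (hrr'.trans h0'.symm.le) hr
    exact ⟨c, hc, by rw [hr0, ← h0']⟩
  · have hle : r / r' ≤ 1 := (div_le_one hpos).mpr hrr'
    refine ⟨(r/r') • c + (1 - r/r') • 0, hC hc h0 (by positivity) (by linarith) (by ring), ?_⟩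
    show r' • ((r/r') • c + (1 - r/r') • 0) = r • c
    rw [smul_zero, add_zero, smul_smul, mul_div_cancel₀ _ (ne_of_gt hpos)]

lemma sum_abs_pos {v : EuclideanSpace ℝ (Fin n)} (hv : v ≠ 0) : 0 < ∑ i, |v i| := by
  have : ∃ i, v i ≠ 0 := by
    by_contra h; push_neg at h; exact hv (PiLp.ext h)
  obtain ⟨i, hi⟩ := this
  have h1 : 0 < |v i| := abs_pos.mpr hi
  have hle : |v i| ≤ ∑ j, |v j| :=
    Finset.single_le_sum (f := fun j => |v j|) (fun j _ => abs_nonneg _) (Finset.mem_univ i)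
  linarith

lemma mem_l1_smul (hk : 1 ≤ k) {v : EuclideanSpace ℝ (Fin n)} (hv : v ≠ 0) :
    v ∈ (∑ i, |v i|) • convexHull ℝ (AtomSet n k) := by
  have hrpos : 0 < ∑ i, |v i| := sum_abs_pos hv
  rw [Set.mem_smul_set_iff_inv_smul_mem₀ (ne_of_gt hrpos)]
  have hmem := Finset.centerMass_mem_convexHull (R := ℝ) (Finset.univ (α := Fin n))
    (w := fun i => |v i|) (fun i _ => abs_nonneg _) hrpos
    (z := fun i => EuclideanSpace.single i (if v i = 0 then (1:ℝ) else v i / |v i|))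
    (fun i _ => single_mem_atom hk i _ (by
      rcases eq_or_ne (v i) 0 with h | h
      · rw [if_pos h]; norm_num
      · rw [if_neg h, abs_div, abs_abs, div_self (abs_ne_zero.mpr h)]))
  have hcm : Finset.univ.centerMass (fun i => |v i|)
      (fun i => EuclideanSpace.single i (if v i = 0 then (1:ℝ) else v i / |v i|))
      = (∑ i, |v i|)⁻¹ • v := by
    rw [Finset.centerMass]
    congr 1
    refine PiLp.ext fun j => ?_
    rw [WithLp.ofLp_sum, Finset.sum_apply]
    have : ∀ i, (|v i| • EuclideanSpace.single i
        (if v i = 0 then (1:ℝ) else v i / |v i|)) j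
        = if j = i then v i else 0 := by
      intro i
      show |v i| * EuclideanSpace.single i (if v i = 0 then (1:ℝ) else v i / |v i|) j = _
      rw [EuclideanSpace.single_apply, mul_ite, mul_zero]
      congr 1
      rcases eq_or_ne (v i) 0 with h | h
      · rw [if_pos h, h, abs_zero, zero_mul]
      · rw [if_neg h]
        field_simp
    rw [Finset.sum_congr rfl fun i _ => this i]
    simp
  rwa [hcm] at hmem

lemma gauge_le_l1 (hk : 1 ≤ k) (v : EuclideanSpace ℝ (Fin n)) :
    atomNormSigma n k v ≤ ∑ i, |v i| := by
  rcases eq_or_ne v 0 with rfl | hv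
  · rw [atomNorm_eq, gauge_zero]
    exact Finset.sum_nonneg fun i _ => abs_nonneg _
  · exact gauge_le_of_mem (Finset.sum_nonneg fun i _ => abs_nonneg _) (mem_l1_smul hk hv)

lemma inner_le_gauge (hk : 1 ≤ k) (hn : 0 < n) (v u : EuclideanSpace ℝ (Fin n))
    (hu : ∀ a ∈ AtomSet n k, (inner ℝ a u : ℝ) ≤ 1) :
    (inner ℝ v u : ℝ) ≤ atomNormSigma n k v := by
  have hC : ∀ c ∈ convexHull ℝ (AtomSet n k), (inner ℝ c u : ℝ) ≤ 1 := by
    intro c hc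
    have hconv : Convex ℝ {x : EuclideanSpace ℝ (Fin n) | (inner ℝ x u : ℝ) ≤ 1} :=
      convex_halfSpace_le ⟨fun a b => by rw [inner_add_left],
        fun c x => by rw [real_inner_smul_left]; rfl⟩ 1
    exact convexHull_min hu hconv hc
  rw [atomNorm_eq, gauge_def]
  refine le_csInf ⟨∑ i, |v i| + 1, Set.mem_Ioi.mpr (by
      have := Finset.sum_nonneg (s := Finset.univ) fun i (_ : i ∈ Finset.univ) => abs_nonneg (v i)
      linarith), ?_⟩ ?_
  · rcases eq_or_ne v 0 with rfl | hv
    · exact ⟨0, zero_mem_C hk hn, smul_zero _⟩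
    · exact smul_C_mono (convex_convexHull ℝ _) (zero_mem_C hk hn)
        (Finset.sum_nonneg fun i _ => abs_nonneg _) (by linarith) (mem_l1_smul hk hv)
  · rintro b ⟨hbpos, c, hc, rfl⟩
    rw [real_inner_smul_left]
    have := hC c hc
    rw [Set.mem_Ioi] at hbpos
    nlinarith

lemma norm_le_gauge (hk : 1 ≤ k) (hn : 0 < n) (v : EuclideanSpace ℝ (Fin n)) :
    ‖v‖ ≤ atomNormSigma n k v := by
  rcases eq_or_ne v 0 with rfl | hv
  · rw [atomNorm_eq, gauge_zero, norm_zero]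
  · have := inner_le_gauge (n := n) (k := k) hk hn v (‖v‖⁻¹ • v) (fun a ha => by
      rw [real_inner_smul_right]
      have h1 : (inner ℝ a v : ℝ) ≤ ‖a‖ * ‖v‖ := real_inner_le_norm a v
      rw [ha.2, one_mul] at h1
      have h2 : (0:ℝ) ≤ ‖v‖⁻¹ := by positivity
      calc ‖v‖⁻¹ * (inner ℝ a v : ℝ) ≤ ‖v‖⁻¹ * ‖v‖ := by nlinarith
        _ = 1 := inv_mul_cancel₀ (norm_ne_zero_iff.mpr hv))
    rw [real_inner_smul_right, real_inner_self_eq_norm_sq] at this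
    have h : ‖v‖⁻¹ * ‖v‖ ^ 2 = ‖v‖ := by
      rw [sq, ← mul_assoc, inv_mul_cancel₀ (norm_ne_zero_iff.mpr hv), one_mul]
    rwa [h] at this

lemma gauge_le_norm_of_sparse {v : EuclideanSpace ℝ (Fin n)} (hv : v ∈ sparseVecs n k) :
    atomNormSigma n k v ≤ ‖v‖ := by
  rcases eq_or_ne v 0 with rfl | hv0
  · rw [atomNorm_eq, gauge_zero, norm_zero]
  · refine gauge_le_of_mem (norm_nonneg v) ?_
    rw [Set.mem_smul_set_iff_inv_smul_mem₀ (norm_ne_zero_iff.mpr hv0)]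
    refine subset_convexHull ℝ _ ⟨?_, ?_⟩
    · obtain ⟨s, hs, h0⟩ := hv
      exact ⟨s, hs, fun i hi => by show ‖v‖⁻¹ * v i = 0; rw [h0 i hi, mul_zero]⟩
    · rw [norm_smul, norm_inv, norm_norm, inv_mul_cancel₀ (norm_ne_zero_iff.mpr hv0)]


/-! ### The polytope lemma -/

def Pset (n k : ℕ) : Set (EuclideanSpace ℝ (Fin n)) :=
  {v | (∀ i, |v i| ≤ 1) ∧ ∑ i, |v i| ≤ (k:ℝ)}

def Ek (n k : ℕ) : Set (EuclideanSpace ℝ (Fin n)) :=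
  {v | (∀ i, v i = 0 ∨ |v i| = 1) ∧ ∑ i, |v i| ≤ (k:ℝ)}

lemma convex_P : Convex ℝ (Pset n k) := by
  intro x hx y hy a b ha hb hab
  have hcoord : ∀ i, |(a • x + b • y) i| ≤ a * |x i| + b * |y i| := by
    intro i
    have he : (a • x + b • y) i = a * x i + b * y i := rfl
    rw [he]
    calc |a * x i + b * y i| ≤ |a * x i| + |b * y i| := abs_add_le _ _
      _ = a * |x i| + b * |y i| := by
          rw [abs_mul, abs_mul, abs_of_nonneg ha, abs_of_nonneg hb]
  constructor
  · intro i
    have h1 : a * |x i| ≤ a * 1 := mul_le_mul_of_nonneg_left (hx.1 i) ha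
    have h2 : b * |y i| ≤ b * 1 := mul_le_mul_of_nonneg_left (hy.1 i) hb
    have := hcoord i
    rw [mul_one] at h1 h2
    linarith
  · calc ∑ i, |(a • x + b • y) i| ≤ ∑ i, (a * |x i| + b * |y i|) :=
        Finset.sum_le_sum fun i _ => hcoord i
      _ = a * ∑ i, |x i| + b * ∑ i, |y i| := by
          rw [Finset.sum_add_distrib, Finset.mul_sum, Finset.mul_sum]
      _ ≤ a * k + b * k := by
          have h1 : a * ∑ i, |x i| ≤ a * k := mul_le_mul_of_nonneg_left hx.2 ha
          have h2 : b * ∑ i, |y i| ≤ b * k := mul_le_mul_of_nonneg_left hy.2 hb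
          linarith
      _ = k := by rw [← add_mul, hab, one_mul]

lemma isCompact_P : IsCompact (Pset n k) := by
  have hclosed : IsClosed (Pset n k) := by
    have heq : Pset n k = (⋂ i, {v : EuclideanSpace ℝ (Fin n) | |v i| ≤ 1}) ∩
        {v : EuclideanSpace ℝ (Fin n) | ∑ i, |v i| ≤ (k:ℝ)} := by
      ext v; simp [Pset, Set.mem_iInter]
    rw [heq]
    refine IsClosed.inter (isClosed_iInter fun i => isClosed_le
      (continuous_abs.comp (EuclideanSpace.proj i).continuous) continuous_const) ?_
    exact isClosed_le (continuous_finset_sum _ fun i _ =>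
      continuous_abs.comp (EuclideanSpace.proj i).continuous) continuous_const
  have hbdd : Bornology.IsBounded (Pset n k) := by
    refine (Metric.isBounded_closedBall (x := (0 : EuclideanSpace ℝ (Fin n)))
      (r := Real.sqrt n)).subset ?_
    intro v hv
    rw [Metric.mem_closedBall, dist_zero_right, EuclideanSpace.norm_eq]
    apply Real.sqrt_le_sqrt
    calc ∑ i, ‖v i‖^2 ≤ ∑ _i : Fin n, (1:ℝ) := by
          refine Finset.sum_le_sum fun i _ => ?_
          rw [Real.norm_eq_abs]
          nlinarith [hv.1 i, abs_nonneg (v i)]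
      _ = n := by simp
  exact Metric.isCompact_of_isClosed_isBounded hclosed hbdd

lemma abs_add_sgn {a : ℝ} (ha : a ≠ 0) {ε : ℝ} (hε : 0 ≤ ε) :
    |a + ε * (if 0 < a then 1 else -1)| = |a| + ε := by
  rcases lt_or_gt_of_ne ha with h | h
  · rw [if_neg (not_lt.mpr h.le), mul_neg_one, abs_of_neg h,
      abs_of_neg (by linarith : a + -ε < 0)]
    ring
  · rw [if_pos h, mul_one, abs_of_pos h, abs_of_pos (by linarith)]

lemma abs_sub_sgn {a : ℝ} (ha : a ≠ 0) {ε : ℝ} (h0 : 0 ≤ ε) (hε : ε ≤ |a|) :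
    |a - ε * (if 0 < a then 1 else -1)| = |a| - ε := by
  rcases lt_or_gt_of_ne ha with h | h
  · rw [abs_of_neg h] at hε
    rw [if_neg (not_lt.mpr h.le), mul_neg_one, abs_of_neg h, sub_neg_eq_add,
      abs_of_nonpos (by linarith : a + ε ≤ 0)]
    ring
  · rw [abs_of_pos h] at hε
    rw [if_pos h, mul_one, abs_of_pos h, abs_of_nonneg (by linarith)]

lemma sum_ite_abs (x : Fin n → ℝ) (i : Fin n) (b : ℝ) :
    ∑ l, |if l = i then b else x l| = |b| + ∑ l ∈ Finset.univ.erase i, |x l| := by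
  rw [← Finset.add_sum_erase _ (fun l => |if l = i then b else x l|) (Finset.mem_univ i),
    if_pos rfl]
  congr 1
  exact Finset.sum_congr rfl fun l hl => by rw [if_neg (Finset.ne_of_mem_erase hl)]

lemma sum_abs_decomp (x : Fin n → ℝ) (i : Fin n) :
    ∑ l, |x l| = |x i| + ∑ l ∈ Finset.univ.erase i, |x l| :=
  (Finset.add_sum_erase _ (fun l => |x l|) (Finset.mem_univ i)).symm

lemma sum_ite_abs2 (x : Fin n → ℝ) {i j : Fin n} (hij : j ≠ i) (b c : ℝ) :
    ∑ l, |if l = i then b else if l = j then c else x l|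
      = |b| + (|c| + ∑ l ∈ (Finset.univ.erase i).erase j, |x l|) := by
  rw [← Finset.add_sum_erase _ (fun l => |if l = i then b else if l = j then c else x l|)
    (Finset.mem_univ i), if_pos rfl]
  congr 1
  rw [← Finset.add_sum_erase _ (fun l => |if l = i then b else if l = j then c else x l|)
    (Finset.mem_erase.mpr ⟨hij, Finset.mem_univ j⟩), if_neg hij, if_pos rfl]
  congr 1
  refine Finset.sum_congr rfl fun l hl => ?_
  have hl1 : l ≠ j := Finset.ne_of_mem_erase hl
  have hl2 : l ≠ i := Finset.ne_of_mem_erase (Finset.mem_of_mem_erase hl)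
  rw [if_neg hl2, if_neg hl1]

lemma sum_abs_decomp2 (x : Fin n → ℝ) {i j : Fin n} (hij : j ≠ i) :
    ∑ l, |x l| = |x i| + (|x j| + ∑ l ∈ (Finset.univ.erase i).erase j, |x l|) := by
  rw [sum_abs_decomp x i]
  congr 1
  exact (Finset.add_sum_erase _ (fun l => |x l|)
    (Finset.mem_erase.mpr ⟨hij, Finset.mem_univ j⟩)).symm

lemma extremePoints_subset (hkn : (k:ℝ) < n) :
    Set.extremePoints ℝ (Pset n k) ⊆ Ek n k := by
  intro x hx
  rw [mem_extremePoints] at hx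
  obtain ⟨hxP, hext⟩ := hx
  refine ⟨?_, hxP.2⟩
  by_contra hcon
  push_neg at hcon
  obtain ⟨i, hi0, hi1⟩ := hcon
  have hfi : 0 < |x i| := abs_pos.mpr hi0
  have hfi1 : |x i| < 1 := lt_of_le_of_ne (hxP.1 i) hi1
  rcases lt_or_eq_of_le hxP.2 with hlt | heq
  · -- Case ∑ < k : perturb coordinate i
    set ε := min (1 - |x i|) ((k:ℝ) - ∑ l, |x l|) with hεdef
    have hεpos : 0 < ε := lt_min (by linarith) (by linarith)
    have hε1 : ε ≤ 1 - |x i| := min_le_left _ _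
    have hε2 : ε ≤ (k:ℝ) - ∑ l, |x l| := min_le_right _ _
    set y : EuclideanSpace ℝ (Fin n) := WithLp.toLp 2 (fun l => if l = i then x i + ε else x l) with hy
    set z : EuclideanSpace ℝ (Fin n) := WithLp.toLp 2 (fun l => if l = i then x i - ε else x l) with hz
    have habs_add : |x i + ε| ≤ |x i| + ε := by
      have := abs_add_le (x i) ε
      rwa [abs_of_nonneg hεpos.le] at this
    have habs_sub : |x i - ε| ≤ |x i| + ε := by
      have := abs_add_le (x i) (-ε)
      rw [abs_neg, abs_of_nonneg hεpos.le] at this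
      simpa [sub_eq_add_neg] using this
    have hyP : y ∈ Pset n k := by
      constructor
      · intro l
        show |if l = i then x i + ε else x l| ≤ 1
        by_cases hli : l = i
        · rw [if_pos hli]; linarith
        · rw [if_neg hli]; exact hxP.1 l
      · show ∑ l, |if l = i then x i + ε else x l| ≤ (k:ℝ)
        rw [sum_ite_abs]
        have h2 := sum_abs_decomp x i
        linarith
    have hzP : z ∈ Pset n k := by
      constructor
      · intro l
        show |if l = i then x i - ε else x l| ≤ 1
        by_cases hli : l = i
        · rw [if_pos hli]; linarith
        · rw [if_neg hli]; exact hxP.1 l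
      · show ∑ l, |if l = i then x i - ε else x l| ≤ (k:ℝ)
        rw [sum_ite_abs]
        have h2 := sum_abs_decomp x i
        linarith
    have hmid : (1/2 : ℝ) • y + (1/2 : ℝ) • z = x := by
      refine PiLp.ext fun l => ?_
      show (1/2 : ℝ) * (if l = i then x i + ε else x l)
        + (1/2 : ℝ) * (if l = i then x i - ε else x l) = x l
      by_cases hli : l = i
      · rw [if_pos hli, if_pos hli, hli]; ring
      · rw [if_neg hli, if_neg hli]; ring
    have hyx := (hext y hyP z hzP
      ⟨1/2, 1/2, by norm_num, by norm_num, by norm_num, hmid⟩).1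
    have hthis : x i + ε = x i := by
      have h1 : y i = x i + ε := if_pos rfl
      rw [← h1, hyx]
    linarith
  · -- Case ∑ = k : find second fractional coordinate
    have hj : ∃ j, j ≠ i ∧ x j ≠ 0 ∧ |x j| ≠ 1 := by
      by_contra h
      push_neg at h
      set c := (Finset.univ.erase i).filter (fun j => x j ≠ 0) with hc
      have hsum2 : ∑ l ∈ Finset.univ.erase i, |x l| = c.card := by
        have hterm : ∀ l ∈ Finset.univ.erase i, |x l| = if x l ≠ 0 then 1 else 0 := by
          intro l hl
          rcases eq_or_ne (x l) 0 with h0 | h0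
          · rw [if_neg (by simpa using h0), h0, abs_zero]
          · rw [if_pos h0]
            exact h l (Finset.ne_of_mem_erase hl) h0
        rw [Finset.sum_congr rfl hterm, Finset.sum_ite, Finset.sum_const, Finset.sum_const]
        simp [hc]
      have htotal := sum_abs_decomp x i
      rw [hsum2] at htotal
      rw [htotal] at heq
      have h1 : (c.card : ℝ) < k := by linarith
      have hnat : c.card < k := by exact_mod_cast h1
      have h2 : (c.card : ℝ) + 1 ≤ k := by exact_mod_cast hnat
      linarith
    obtain ⟨j, hji, hj0, hj1⟩ := hj
    have hfj : 0 < |x j| := abs_pos.mpr hj0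
    have hfj1 : |x j| < 1 := lt_of_le_of_ne (hxP.1 j) hj1
    set si : ℝ := if 0 < x i then 1 else -1 with hsi
    set sj : ℝ := if 0 < x j then 1 else -1 with hsj
    set ε := min (min |x i| (1 - |x i|)) (min |x j| (1 - |x j|)) with hεdef
    have hεpos : 0 < ε := lt_min (lt_min hfi (by linarith)) (lt_min hfj (by linarith))
    have hεi : ε ≤ |x i| := (min_le_left _ _).trans (min_le_left _ _)
    have hεi1 : ε ≤ 1 - |x i| := (min_le_left _ _).trans (min_le_right _ _)
    have hεj : ε ≤ |x j| := (min_le_right _ _).trans (min_le_left _ _)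
    have hεj1 : ε ≤ 1 - |x j| := (min_le_right _ _).trans (min_le_right _ _)
    have habsi_add : |x i + ε * si| = |x i| + ε := abs_add_sgn hi0 hεpos.le
    have habsi_sub : |x i - ε * si| = |x i| - ε := abs_sub_sgn hi0 hεpos.le hεi
    have habsj_add : |x j + ε * sj| = |x j| + ε := abs_add_sgn hj0 hεpos.le
    have habsj_sub : |x j - ε * sj| = |x j| - ε := abs_sub_sgn hj0 hεpos.le hεj
    set y : EuclideanSpace ℝ (Fin n) :=
      WithLp.toLp 2 (fun l => if l = i then x i + ε * si else if l = j then x j - ε * sj else x l) with hy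
    set z : EuclideanSpace ℝ (Fin n) :=
      WithLp.toLp 2 (fun l => if l = i then x i - ε * si else if l = j then x j + ε * sj else x l) with hz
    have hyP : y ∈ Pset n k := by
      constructor
      · intro l
        show |if l = i then x i + ε * si else if l = j then x j - ε * sj else x l| ≤ 1
        by_cases hli : l = i
        · rw [if_pos hli, habsi_add]; linarith
        · by_cases hlj : l = j
          · rw [if_neg hli, if_pos hlj, habsj_sub]; linarith
          · rw [if_neg hli, if_neg hlj]; exact hxP.1 l
      · show ∑ l, |if l = i then x i + ε * si else if l = j then x j - ε * sj else x l| ≤ (k:ℝ)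
        rw [sum_ite_abs2 x hji, habsi_add, habsj_sub]
        have := sum_abs_decomp2 x hji
        linarith
    have hzP : z ∈ Pset n k := by
      constructor
      · intro l
        show |if l = i then x i - ε * si else if l = j then x j + ε * sj else x l| ≤ 1
        by_cases hli : l = i
        · rw [if_pos hli, habsi_sub]; linarith
        · by_cases hlj : l = j
          · rw [if_neg hli, if_pos hlj, habsj_add]; linarith
          · rw [if_neg hli, if_neg hlj]; exact hxP.1 l
      · show ∑ l, |if l = i then x i - ε * si else if l = j then x j + ε * sj else x l| ≤ (k:ℝ)
        rw [sum_ite_abs2 x hji, habsi_sub, habsj_add]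
        have := sum_abs_decomp2 x hji
        linarith
    have hmid : (1/2 : ℝ) • y + (1/2 : ℝ) • z = x := by
      refine PiLp.ext fun l => ?_
      show (1/2 : ℝ) * (if l = i then x i + ε * si else if l = j then x j - ε * sj else x l)
        + (1/2 : ℝ) * (if l = i then x i - ε * si else if l = j then x j + ε * sj else x l)
        = x l
      by_cases hli : l = i
      · rw [if_pos hli, if_pos hli, hli]; ring
      · by_cases hlj : l = j
        · rw [if_neg hli, if_neg hli, if_pos hlj, if_pos hlj, hlj]; ring
        · rw [if_neg hli, if_neg hli, if_neg hlj, if_neg hlj]; ring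
    have hyx := (hext y hyP z hzP
      ⟨1/2, 1/2, by norm_num, by norm_num, by norm_num, hmid⟩).1
    have hcoord : x i + ε * si = x i := by
      have h1 : y i = x i + ε * si := if_pos rfl
      rw [← h1, hyx]
    have hsine : si ≠ 0 := by
      rw [hsi]; rcases lt_or_ge 0 (x i) with h | h
      · rw [if_pos h]; norm_num
      · rw [if_neg (not_lt.mpr h)]; norm_num
    have hz0 : ε * si = 0 := by linarith
    rcases mul_eq_zero.mp hz0 with h | h
    · exact absurd h (ne_of_gt hεpos)
    · exact hsine h

lemma Ek_finite : (Ek n k).Finite := by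
  have himg : ((fun (v : EuclideanSpace ℝ (Fin n)) (i : Fin n) => v i) '' (Ek n k)).Finite := by
    refine Set.Finite.subset (Set.Finite.pi (t := fun _ : Fin n => ({-1,0,1} : Set ℝ))
      (fun i => ((Set.finite_singleton (1:ℝ)).insert 0).insert (-1))) ?_
    rintro f ⟨v, hv, rfl⟩
    rw [Set.mem_pi]
    intro i _
    rcases hv.1 i with h0 | h1
    · simp [h0]
    · rcases (abs_eq (by norm_num : (0:ℝ) ≤ 1)).mp h1 with h | h
      · simp [h]
      · simp [h]
  exact Set.Finite.of_finite_image himg fun a _ b _ hab => PiLp.ext fun i => congrFun hab i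

lemma P_subset_hull (hkn : (k:ℝ) < n) : Pset n k ⊆ convexHull ℝ (Ek n k) := by
  have h1 : Pset n k = closure (convexHull ℝ (Set.extremePoints ℝ (Pset n k))) :=
    (closure_convexHull_extremePoints isCompact_P convex_P).symm
  rw [h1]
  calc closure (convexHull ℝ (Set.extremePoints ℝ (Pset n k)))
      ⊆ closure (convexHull ℝ (Ek n k)) :=
        closure_mono (convexHull_mono (extremePoints_subset hkn))
    _ = convexHull ℝ (Ek n k) :=
        ((Ek_finite.isCompact_convexHull (𝕜 := ℝ)).isClosed).closure_eq

lemma Ek_subset (hk : 1 ≤ k) (hn : 0 < n) :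
    Ek n k ⊆ Real.sqrt k • convexHull ℝ (AtomSet n k) := by
  intro v hv
  rcases eq_or_ne v 0 with rfl | hv0
  · exact ⟨0, zero_mem_C hk hn, smul_zero _⟩
  · have hnormsq : ‖v‖ = Real.sqrt (∑ i, |v i|) := by
      rw [EuclideanSpace.norm_eq]
      congr 1
      refine Finset.sum_congr rfl fun i _ => ?_
      rcases hv.1 i with h0 | h1
      · rw [h0]; simp
      · rw [Real.norm_eq_abs, h1]; norm_num
    have hmemA : ‖v‖⁻¹ • v ∈ AtomSet n k := by
      constructor
      · refine ⟨Finset.univ.filter (fun i => v i ≠ 0), ?_, ?_⟩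
        · have hcard : (((Finset.univ.filter (fun i => v i ≠ 0)).card : ℝ)) ≤ ∑ i, |v i| := by
            calc ((Finset.univ.filter (fun i => v i ≠ 0)).card : ℝ)
                = ∑ _i ∈ Finset.univ.filter (fun i => v i ≠ 0), (1:ℝ) := by simp
              _ ≤ ∑ i ∈ Finset.univ.filter (fun i => v i ≠ 0), |v i| := by
                  refine Finset.sum_le_sum fun i hi => ?_
                  rcases hv.1 i with h0 | h1
                  · exact absurd h0 (Finset.mem_filter.mp hi).2
                  · rw [h1]
              _ ≤ ∑ i, |v i| := Finset.sum_le_sum_of_subset_of_nonneg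
                  (Finset.filter_subset _ _) (fun i _ _ => abs_nonneg _)
          have := hcard.trans hv.2
          exact_mod_cast this
        · intro i hi
          have hvi : v i = 0 := by
            by_contra hne
            exact hi (Finset.mem_filter.mpr ⟨Finset.mem_univ i, hne⟩)
          show ‖v‖⁻¹ * v i = 0
          rw [hvi, mul_zero]
      · rw [norm_smul, norm_inv, norm_norm, inv_mul_cancel₀ (norm_ne_zero_iff.mpr hv0)]
    have hmem : v ∈ ‖v‖ • convexHull ℝ (AtomSet n k) := by
      refine ⟨‖v‖⁻¹ • v, subset_convexHull ℝ _ hmemA, ?_⟩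
      show ‖v‖ • ‖v‖⁻¹ • v = v
      rw [smul_smul, mul_inv_cancel₀ (norm_ne_zero_iff.mpr hv0), one_smul]
    refine smul_C_mono (convex_convexHull ℝ _) (zero_mem_C hk hn) (norm_nonneg v) ?_ hmem
    rw [hnormsq]
    exact Real.sqrt_le_sqrt hv.2

lemma gauge_le_sqrt_mul (hk : 1 ≤ k) (hkn : (k:ℝ) < n) (hn : 0 < n)
    {v : EuclideanSpace ℝ (Fin n)} {α : ℝ} (hα : 0 ≤ α)
    (hinf : ∀ i, |v i| ≤ α) (h1 : ∑ i, |v i| ≤ k * α) :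
    atomNormSigma n k v ≤ Real.sqrt k * α := by
  rcases eq_or_lt_of_le hα with h0 | hpos
  · have hv0 : v = 0 := PiLp.ext fun i => abs_eq_zero.mp
      (le_antisymm (by rw [← h0] at hinf; exact hinf i) (abs_nonneg _))
    rw [hv0, atomNorm_eq, gauge_zero, ← h0, mul_zero]
  · have humem : α⁻¹ • v ∈ Pset n k := by
      constructor
      · intro i
        show |α⁻¹ * v i| ≤ 1
        rw [abs_mul, abs_of_nonneg (inv_nonneg.mpr hα)]
        calc α⁻¹ * |v i| ≤ α⁻¹ * α :=
            mul_le_mul_of_nonneg_left (hinf i) (inv_nonneg.mpr hα)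
          _ = 1 := inv_mul_cancel₀ (ne_of_gt hpos)
      · show ∑ i, |α⁻¹ * v i| ≤ (k:ℝ)
        have : ∀ i, |α⁻¹ * v i| = α⁻¹ * |v i| := fun i => by
          rw [abs_mul, abs_of_nonneg (inv_nonneg.mpr hα)]
        rw [Finset.sum_congr rfl fun i _ => this i, ← Finset.mul_sum]
        calc α⁻¹ * ∑ i, |v i| ≤ α⁻¹ * (k * α) :=
            mul_le_mul_of_nonneg_left h1 (inv_nonneg.mpr hα)
          _ = k := by field_simp
    have hsub : convexHull ℝ (Ek n k) ⊆ Real.sqrt k • convexHull ℝ (AtomSet n k) :=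
      convexHull_min (Ek_subset hk hn) ((convex_convexHull ℝ _).smul _)
    obtain ⟨c, hc, hec⟩ := hsub (P_subset_hull hkn humem)
    have hec' : Real.sqrt k • c = α⁻¹ • v := hec
    refine gauge_le_of_mem (by positivity) ⟨c, hc, ?_⟩
    show (Real.sqrt k * α) • c = v
    calc (Real.sqrt k * α) • c = α • (Real.sqrt k • c) := by rw [smul_smul, mul_comm]
      _ = α • (α⁻¹ • v) := by rw [hec']
      _ = v := by rw [smul_smul, mul_inv_cancel₀ (ne_of_gt hpos), one_smul]

/-! ### Application lemmas -/

lemma normsq_restrict (z : EuclideanSpace ℝ (Fin n)) (W : Finset (Fin n)) :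
    ‖coordRestrict z W‖^2 = ∑ i ∈ W, (z i)^2 := by
  rw [EuclideanSpace.norm_eq, Real.sq_sqrt (Finset.sum_nonneg fun i _ => sq_nonneg _)]
  have h : ∀ i, ‖coordRestrict z W i‖^2 = if i ∈ W then (z i)^2 else 0 := by
    intro i
    show ‖if i ∈ W then z i else 0‖^2 = _
    by_cases hi : i ∈ W
    · rw [if_pos hi, if_pos hi, Real.norm_eq_abs, sq_abs]
    · rw [if_neg hi, if_neg hi, norm_zero]; ring
  rw [Finset.sum_congr rfl fun i _ => h i, Finset.sum_ite_mem, Finset.univ_inter]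

lemma sum_abs_restrict (z : EuclideanSpace ℝ (Fin n)) (W : Finset (Fin n)) :
    ∑ i, |coordRestrict z W i| = ∑ i ∈ W, |z i| := by
  have h : ∀ i, |coordRestrict z W i| = if i ∈ W then |z i| else 0 := by
    intro i
    show |if i ∈ W then z i else 0| = _
    by_cases hi : i ∈ W
    · rw [if_pos hi, if_pos hi]
    · rw [if_neg hi, if_neg hi, abs_zero]
  rw [Finset.sum_congr rfl fun i _ => h i, Finset.sum_ite_mem, Finset.univ_inter]

lemma restrict_T_pos {z : EuclideanSpace ℝ (Fin n)} {Tz : Finset (Fin n)}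
    (hcard : Tz.card = k) (hk : 1 ≤ k)
    (hdom : ∀ i ∈ Tz, ∀ j ∉ Tz, |z j| ≤ |z i|) (hz : z ≠ 0) :
    0 < ‖coordRestrict z Tz‖ := by
  rw [norm_pos_iff]
  intro hc
  apply hz
  have hTz : ∀ i ∈ Tz, z i = 0 := by
    intro i hi
    have h : coordRestrict z Tz i = (0 : EuclideanSpace ℝ (Fin n)) i := by rw [hc]
    show z i = 0
    rwa [show coordRestrict z Tz i = z i from if_pos hi] at h
  refine PiLp.ext fun j => ?_
  by_cases hj : j ∈ Tz
  · exact hTz j hj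
  · obtain ⟨i0, hi0⟩ := Finset.card_pos.mp (by omega : 0 < Tz.card)
    have h := hdom i0 hi0 j hj
    rw [hTz i0 hi0, abs_zero] at h
    exact abs_eq_zero.mp (le_antisymm h (abs_nonneg _))

lemma sum_abs_T_le {z : EuclideanSpace ℝ (Fin n)} {Tz : Finset (Fin n)}
    (hcard : Tz.card = k) :
    ∑ i ∈ Tz, |z i| ≤ Real.sqrt k * ‖coordRestrict z Tz‖ := by
  have h := sq_sum_le_card_mul_sum_sq (s := Tz) (f := fun i => |z i|)
  have h2 : ∑ i ∈ Tz, |z i|^2 = ‖coordRestrict z Tz‖^2 := by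
    rw [normsq_restrict]
    exact Finset.sum_congr rfl fun i _ => sq_abs (z i)
  rw [h2, hcard] at h
  have h3 : ∑ i ∈ Tz, |z i| = Real.sqrt ((∑ i ∈ Tz, |z i|)^2) :=
    (Real.sqrt_sq (Finset.sum_nonneg fun i _ => abs_nonneg _)).symm
  rw [h3]
  calc Real.sqrt ((∑ i ∈ Tz, |z i|)^2) ≤ Real.sqrt (k * ‖coordRestrict z Tz‖^2) :=
      Real.sqrt_le_sqrt h
    _ = Real.sqrt k * ‖coordRestrict z Tz‖ := by
      rw [Real.sqrt_mul (Nat.cast_nonneg k), Real.sqrt_sq (norm_nonneg _)]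

lemma coord_bound {z : EuclideanSpace ℝ (Fin n)} {Tz : Finset (Fin n)}
    (hcard : Tz.card = k)
    (hdom : ∀ i ∈ Tz, ∀ j ∉ Tz, |z j| ≤ |z i|) {j : Fin n} (hj : j ∉ Tz) :
    Real.sqrt k * |z j| ≤ ‖coordRestrict z Tz‖ := by
  have hsq : (Real.sqrt k * |z j|)^2 ≤ ‖coordRestrict z Tz‖^2 := by
    rw [mul_pow, Real.sq_sqrt (Nat.cast_nonneg k), normsq_restrict]
    have h1 : ∀ i ∈ Tz, |z j|^2 ≤ (z i)^2 := by
      intro i hi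
      have := hdom i hi j hj
      calc |z j|^2 ≤ |z i|^2 := by nlinarith [abs_nonneg (z j)]
        _ = (z i)^2 := sq_abs _
    calc (k:ℝ) * |z j|^2 = Tz.card • |z j|^2 := by rw [hcard, nsmul_eq_mul]
      _ ≤ ∑ i ∈ Tz, (z i)^2 := Finset.card_nsmul_le_sum _ _ _ h1
  have h1 : 0 ≤ Real.sqrt k * |z j| := by positivity
  nlinarith [norm_nonneg (coordRestrict z Tz)]

lemma ratio_le (hk : 1 ≤ k) (hkn : (k:ℝ) < n) (hn : 0 < n)
    {z : EuclideanSpace ℝ (Fin n)} {Tz : Finset (Fin n)} {c : ℝ}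
    (hcard : Tz.card = k) (hdom : ∀ i ∈ Tz, ∀ j ∉ Tz, |z j| ≤ |z i|)
    (hc : 1 ≤ c) (hz0 : z ≠ 0)
    (hsum : ∑ i ∈ Tzᶜ, |z i| ≤ c * ∑ i ∈ Tz, |z i|) :
    atomNormSigma n k (coordRestrict z Tzᶜ) ^ 2 / ‖coordRestrict z Tz‖ ^ 2 ≤ c ^ 2 := by
  set N := ‖coordRestrict z Tz‖ with hN
  have hNpos : 0 < N := restrict_T_pos hcard hk hdom hz0
  have hkpos : (0:ℝ) < Real.sqrt k := Real.sqrt_pos.mpr (by exact_mod_cast hk)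
  set α := c * N / Real.sqrt k with hα
  have hαpos : 0 < α := by positivity
  have hg : atomNormSigma n k (coordRestrict z Tzᶜ) ≤ Real.sqrt k * α := by
    refine gauge_le_sqrt_mul hk hkn hn hαpos.le ?_ ?_
    · intro i
      show |if i ∈ Tzᶜ then z i else 0| ≤ α
      by_cases hi : i ∈ Tzᶜ
      · rw [if_pos hi]
        have h1 := coord_bound hcard hdom (Finset.mem_compl.mp hi)
        rw [hα]
        rw [div_eq_mul_inv]
        have h2 : |z i| ≤ N / Real.sqrt k := by
          rw [le_div_iff₀ hkpos]; linarith [h1]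
        calc |z i| ≤ N / Real.sqrt k := h2
          _ ≤ c * N / Real.sqrt k := by gcongr; nlinarith
          _ = c * N * (Real.sqrt k)⁻¹ := by rw [div_eq_mul_inv]
      · rw [if_neg hi, abs_zero]; exact hαpos.le
    · rw [sum_abs_restrict]
      have h1 := sum_abs_T_le (z := z) hcard
      have h2 : (k:ℝ) * α = c * (Real.sqrt k * N) := by
        rw [hα]
        calc (k:ℝ) * (c * N / Real.sqrt k) = (c * N) * ((k:ℝ) / Real.sqrt k) := by ring
          _ = (c * N) * Real.sqrt k := by rw [Real.div_sqrt]
          _ = c * (Real.sqrt k * N) := by ring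
      rw [h2]
      calc ∑ i ∈ Tzᶜ, |z i| ≤ c * ∑ i ∈ Tz, |z i| := hsum
        _ ≤ c * (Real.sqrt k * N) := by
          apply mul_le_mul_of_nonneg_left h1 (by linarith)
  have hg0 : 0 ≤ atomNormSigma n k (coordRestrict z Tzᶜ) := gauge_nonneg _
  have hka : Real.sqrt k * α = c * N := by
    rw [hα, mul_div_assoc']
    rw [mul_comm (Real.sqrt k) (c * N), mul_div_assoc, div_self (ne_of_gt hkpos), mul_one]
  rw [hka] at hg
  rw [div_le_iff₀ (by positivity)]
  nlinarith

lemma hsum_of_descent {w : Fin n → ℝ} {m : ℝ} (hm0 : 0 < m)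
    (hwlb : ∀ i, m ≤ w i) (hwub : ∀ i, w i ≤ 1)
    {z : EuclideanSpace ℝ (Fin n)} {Tz : Finset (Fin n)}
    (hcard : Tz.card = k)
    (hdom : ∀ i ∈ Tz, ∀ j ∉ Tz, |z j| ≤ |z i|)
    {S : Finset (Fin n)} (hSk : S.card ≤ k)
    (hS : ∑ i ∈ Sᶜ, w i * |z i| ≤ ∑ i ∈ S, w i * |z i|) :
    ∑ i ∈ Tzᶜ, |z i| ≤ m⁻¹ * ∑ i ∈ Tz, |z i| := by
  have hST : ∑ i ∈ S, |z i| ≤ ∑ i ∈ Tz, |z i| :=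
    sum_le_sum_of_dom (fun i => abs_nonneg _) (by omega)
      (fun i hi l hl => hdom l hl i hi)
  have h1 := Finset.sum_add_sum_compl S (fun i => |z i|)
  have h2 := Finset.sum_add_sum_compl Tz (fun i => |z i|)
  have hTc : ∑ i ∈ Tzᶜ, |z i| ≤ ∑ i ∈ Sᶜ, |z i| := by linarith
  have hlb : m * ∑ i ∈ Sᶜ, |z i| ≤ ∑ i ∈ Sᶜ, w i * |z i| := by
    rw [Finset.mul_sum]
    exact Finset.sum_le_sum fun i _ => mul_le_mul_of_nonneg_right (hwlb i) (abs_nonneg _)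
  have hub : ∑ i ∈ S, w i * |z i| ≤ ∑ i ∈ S, |z i| := by
    refine Finset.sum_le_sum fun i _ => ?_
    calc w i * |z i| ≤ 1 * |z i| := mul_le_mul_of_nonneg_right (hwub i) (abs_nonneg _)
      _ = |z i| := one_mul _
  have hchain : m * ∑ i ∈ Tzᶜ, |z i| ≤ ∑ i ∈ Tz, |z i| := by
    have := mul_le_mul_of_nonneg_left hTc hm0.le
    linarith
  rw [inv_mul_eq_div, le_div_iff₀ hm0]
  linarith [hchain]

lemma exists_topk (f : Fin n → ℝ) (s : Finset (Fin n)) (m : ℕ) (hm : m ≤ s.card) :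
    ∃ t, t ⊆ s ∧ t.card = m ∧ ∀ i ∈ t, ∀ l ∈ s \ t, f l ≤ f i := by
  induction m with
  | zero => exact ⟨∅, Finset.empty_subset s, Finset.card_empty, by simp⟩
  | succ m ih =>
    obtain ⟨t, hts, htc, htdom⟩ := ih (by omega)
    have hne : (s \ t).Nonempty := by
      rw [← Finset.card_pos, Finset.card_sdiff_of_subset hts]
      omega
    obtain ⟨a, ha, hamax⟩ := (s \ t).exists_max_image f hne
    refine ⟨insert a t, ?_, ?_, ?_⟩
    · exact Finset.insert_subset (Finset.mem_sdiff.mp ha).1 hts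
    · rw [Finset.card_insert_of_notMem (Finset.mem_sdiff.mp ha).2, htc]
    · intro i hi l hl
      have hl' : l ∈ s \ t := by
        rw [Finset.mem_sdiff] at hl ⊢
        exact ⟨hl.1, fun h => hl.2 (Finset.mem_insert_of_mem h)⟩
      rcases Finset.mem_insert.mp hi with rfl | hit
      · exact hamax l hl'
      · exact htdom i hit l hl'

lemma inner_formula (x y : EuclideanSpace ℝ (Fin n)) : (inner ℝ x y : ℝ) = ∑ i, x i * y i := by
  simp [PiLp.inner_apply, RCLike.inner_apply, mul_comm]

lemma gauge_lower_ind (hk : 1 ≤ k) (hn : 0 < n) {V : Finset (Fin n)} {β : ℝ}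
    (hβ : 0 ≤ β) (hVcard : V.card = k + 1) :
    ((k:ℝ) + 1) * β / Real.sqrt k ≤
      atomNormSigma n k (WithLp.toLp 2 (fun i => if i ∈ V then β else 0)) := by
  have hkpos : (0:ℝ) < Real.sqrt k := Real.sqrt_pos.mpr (by exact_mod_cast hk)
  set u : EuclideanSpace ℝ (Fin n) := WithLp.toLp 2 (fun i => if i ∈ V then (Real.sqrt k)⁻¹ else 0) with hu
  set v : EuclideanSpace ℝ (Fin n) := WithLp.toLp 2 (fun i => if i ∈ V then β else 0) with hv
  have hinner : (inner ℝ v u : ℝ) = ((k:ℝ) + 1) * β / Real.sqrt k := by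
    rw [inner_formula]
    have hterm : ∀ i, v i * u i = if i ∈ V then β * (Real.sqrt k)⁻¹ else 0 := by
      intro i
      show (if i ∈ V then β else 0) * (if i ∈ V then (Real.sqrt k)⁻¹ else 0) = _
      by_cases h : i ∈ V
      · rw [if_pos h, if_pos h, if_pos h]
      · rw [if_neg h, if_neg h, if_neg h, zero_mul]
    rw [Finset.sum_congr rfl fun i _ => hterm i, Finset.sum_ite_mem, Finset.univ_inter,
      Finset.sum_const, hVcard, nsmul_eq_mul]
    push_cast
    rw [div_eq_mul_inv]
    ring
  have hdual : ∀ a ∈ AtomSet n k, (inner ℝ a u : ℝ) ≤ 1 := by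
    intro a ha
    obtain ⟨⟨sa, hsa, ha0⟩, hanorm⟩ := ha
    have hai : (inner ℝ a u : ℝ) = (Real.sqrt k)⁻¹ * ∑ i ∈ V ∩ sa, a i := by
      rw [inner_formula]
      have hterm : ∀ i, a i * u i = if i ∈ V then a i * (Real.sqrt k)⁻¹ else 0 := by
        intro i
        show a i * (if i ∈ V then (Real.sqrt k)⁻¹ else 0) = _
        by_cases h : i ∈ V
        · rw [if_pos h, if_pos h]
        · rw [if_neg h, if_neg h, mul_zero]
      rw [Finset.sum_congr rfl fun i _ => hterm i, Finset.sum_ite_mem, Finset.univ_inter]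
      rw [← Finset.sum_subset (Finset.inter_subset_left : V ∩ sa ⊆ V)
        (fun i hiV hins => by
          have : a i = 0 := ha0 i fun hisa =>
            hins (Finset.mem_inter.mpr ⟨hiV, hisa⟩)
          rw [this, zero_mul])]
      rw [Finset.mul_sum]
      exact Finset.sum_congr rfl fun i _ => mul_comm _ _
    rw [hai]
    have hnormsq : ∑ i, (a i)^2 = 1 := by
      have h := hanorm
      rw [EuclideanSpace.norm_eq] at h
      have h2 : ∑ i, ‖a i‖^2 = 1 := by
        have hnn : 0 ≤ ∑ i, ‖a i‖^2 := Finset.sum_nonneg fun i _ => sq_nonneg _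
        calc ∑ i, ‖a i‖^2 = Real.sqrt (∑ i, ‖a i‖^2) ^ 2 := (Real.sq_sqrt hnn).symm
          _ = 1 := by rw [h]; norm_num
      rw [← h2]
      exact Finset.sum_congr rfl fun i _ => by rw [Real.norm_eq_abs, sq_abs]
    have hsumle : ∑ i ∈ V ∩ sa, a i ≤ Real.sqrt k := by
      have hsq := sq_sum_le_card_mul_sum_sq (s := V ∩ sa) (f := a)
      have hc : ((V ∩ sa).card : ℝ) ≤ k := by
        have : (V ∩ sa).card ≤ sa.card := Finset.card_le_card Finset.inter_subset_right
        have := this.trans hsa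
        exact_mod_cast this
      have hs2 : ∑ i ∈ V ∩ sa, (a i)^2 ≤ 1 := by
        rw [← hnormsq]
        exact Finset.sum_le_sum_of_subset_of_nonneg (Finset.subset_univ _)
          (fun i _ _ => sq_nonneg _)
      have hsq2 : (∑ i ∈ V ∩ sa, a i)^2 ≤ (k:ℝ) := by
        calc (∑ i ∈ V ∩ sa, a i)^2 ≤ ((V ∩ sa).card : ℝ) * ∑ i ∈ V ∩ sa, (a i)^2 := hsq
          _ ≤ (k:ℝ) * 1 := by
            apply mul_le_mul hc hs2 (Finset.sum_nonneg fun i _ => sq_nonneg _)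
              (Nat.cast_nonneg k)
          _ = (k:ℝ) := mul_one _
      calc ∑ i ∈ V ∩ sa, a i ≤ |∑ i ∈ V ∩ sa, a i| := le_abs_self _
        _ = Real.sqrt ((∑ i ∈ V ∩ sa, a i)^2) := (Real.sqrt_sq_eq_abs _).symm
        _ ≤ Real.sqrt k := Real.sqrt_le_sqrt hsq2
    calc (Real.sqrt k)⁻¹ * ∑ i ∈ V ∩ sa, a i ≤ (Real.sqrt k)⁻¹ * Real.sqrt k :=
        mul_le_mul_of_nonneg_left hsumle (by positivity)
      _ = 1 := inv_mul_cancel₀ (ne_of_gt hkpos)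
  have := inner_le_gauge hk hn v u hdual
  rwa [hinner] at this

end L1Aux

set_option maxHeartbeats 1000000 in
/-- Theorem 3 of the paper, the ℓ¹-norm is the unique maximizer of
`A_Σ^{RIP,suff}(R) = (D_Σ(R)+1)^{-1/2}` over weighted ℓ¹-norms. -/
theorem l1_unique_max_Asuff
    (n k : ℕ) (hk : 1 ≤ k) (hn : 2 * k + 1 ≤ n)
    (T : EuclideanSpace ℝ (Fin n) → Finset (Fin n))
    (hT : ∀ z, (T z).card = k ∧ ∀ i ∈ T z, ∀ j ∉ T z, |z j| ≤ |z i|) :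
    Dsigma n k T (wNorm (fun _ => 1)) = 1
    ∧ ∀ w : Fin n → ℝ, (∀ i, 0 < w i) → (∀ i, w i ≤ 1) → (∃ i, w i = 1) →
        w ≠ (fun _ => 1) →
        1 < Dsigma n k T (wNorm w) ∧
        1 / Real.sqrt (Dsigma n k T (wNorm w) + 1)
          < 1 / Real.sqrt (Dsigma n k T (wNorm (fun _ => 1)) + 1) := by
  classical
  have hnpos : 0 < n := by omega
  have hkR : (k:ℝ) < n := by exact_mod_cast (by omega : k < n)
  have hkpos' : (0:ℝ) < (k:ℝ) := by exact_mod_cast hk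
  have hkne : ((k:ℝ)) ≠ 0 := ne_of_gt hkpos'
  -- Part (a) : upper bound
  have hubA : ∀ r ∈ {r : ℝ | ∃ z ∈ descentConeSet (wNorm (fun _ => (1:ℝ))) (sparseVecs n k) \ {0},
      r = (atomNormSigma n k (coordRestrict z (T z)ᶜ)) ^ 2 / ‖coordRestrict z (T z)‖ ^ 2},
      r ≤ 1 := by
    rintro r ⟨z, ⟨hzd, hz0⟩, rfl⟩
    have hz0' : z ≠ 0 := by simpa using hz0
    obtain ⟨S, hSk, hSle⟩ := L1Aux.descent_fwd (w := fun _ => (1:ℝ))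
      (fun i => by norm_num) hzd
    have hsum : ∑ i ∈ (T z)ᶜ, |z i| ≤ 1 * ∑ i ∈ T z, |z i| := by
      have h := L1Aux.hsum_of_descent (w := fun _ => (1:ℝ)) (m := 1) one_pos
        (fun i => le_refl 1) (fun i => le_refl 1) (hT z).1 (hT z).2 hSk hSle
      rwa [inv_one] at h
    have hr := L1Aux.ratio_le hk hkR hnpos (hT z).1 (hT z).2 le_rfl hz0' hsum
    simpa using hr
  -- Part (a) : the value 1 is attained
  have hmemA : (1:ℝ) ∈ {r : ℝ | ∃ z ∈ descentConeSet (wNorm (fun _ => (1:ℝ))) (sparseVecs n k) \ {0},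
      r = (atomNormSigma n k (coordRestrict z (T z)ᶜ)) ^ 2 / ‖coordRestrict z (T z)‖ ^ 2} := by
    obtain ⟨U, hUsub, hUcard⟩ := Finset.exists_subset_card_eq (s := (Finset.univ : Finset (Fin n))) (n := 2*k)
      (by rw [Finset.card_univ, Fintype.card_fin]; omega)
    obtain ⟨S₁, hS₁U, hS₁card⟩ := Finset.exists_subset_card_eq (s := U) (n := k) (by omega)
    set z : EuclideanSpace ℝ (Fin n) := WithLp.toLp 2 (fun i => if i ∈ U then (1:ℝ) else 0) with hzdef
    have habs : ∀ i, |z i| = if i ∈ U then (1:ℝ) else 0 := fun i => by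
      show |if i ∈ U then (1:ℝ) else 0| = _
      by_cases h : i ∈ U
      · rw [if_pos h, abs_one]
      · rw [if_neg h, abs_zero]
    have hsq : ∀ i, (z i)^2 = if i ∈ U then (1:ℝ) else 0 := fun i => by
      show (if i ∈ U then (1:ℝ) else 0)^2 = _
      by_cases h : i ∈ U
      · rw [if_pos h, one_pow]
      · rw [if_neg h]; ring
    have hsumW : ∀ W : Finset (Fin n), ∑ i ∈ W, |z i| = ((W ∩ U).card : ℝ) := by
      intro W
      rw [Finset.sum_congr rfl fun i _ => habs i, Finset.sum_ite_mem,
        Finset.sum_const, nsmul_eq_mul, mul_one]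
    have hsumW2 : ∀ W : Finset (Fin n), ∑ i ∈ W, (z i)^2 = ((W ∩ U).card : ℝ) := by
      intro W
      rw [Finset.sum_congr rfl fun i _ => hsq i, Finset.sum_ite_mem,
        Finset.sum_const, nsmul_eq_mul, mul_one]
    have hz0' : z ≠ 0 := by
      obtain ⟨i₀, hi₀⟩ := Finset.card_pos.mp (by omega : 0 < S₁.card)
      intro h
      have h1 : z i₀ = 1 := if_pos (hS₁U hi₀)
      rw [h] at h1
      exact zero_ne_one (show (0:ℝ) = 1 from h1)
    have hdescent : z ∈ descentConeSet (wNorm (fun _ => (1:ℝ))) (sparseVecs n k) := by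
      refine L1Aux.descent_bwd S₁ (le_of_eq hS₁card) ?_
      have e1 : ∀ (W : Finset (Fin n)),
          ∑ i ∈ W, (fun (_ : Fin n) => (1:ℝ)) i * |z i| = ∑ i ∈ W, |z i| :=
        fun W => Finset.sum_congr rfl fun i _ => one_mul _
      rw [e1, e1, hsumW, hsumW]
      have hcap1 : S₁ᶜ ∩ U = U \ S₁ := by
        ext i; simp [Finset.mem_sdiff, and_comm]
      have hcap2 : S₁ ∩ U = S₁ := Finset.inter_eq_left.mpr hS₁U
      rw [hcap1, hcap2, Finset.card_sdiff_of_subset hS₁U, hUcard, hS₁card]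
      have h2k : 2*k - k = k := by omega
      rw [h2k]
    have hTU : T z ⊆ U := by
      intro i hi
      by_contra hiU
      have hUT : U ⊆ T z := by
        intro j hj
        by_contra hjT
        have h1 := (hT z).2 i hi j hjT
        have h2 : z j = 1 := if_pos hj
        have h3 : z i = 0 := if_neg hiU
        rw [h2, h3, abs_zero, abs_one] at h1
        linarith
      have hcc := Finset.card_le_card hUT
      rw [hUcard, (hT z).1] at hcc
      omega
    refine ⟨z, ⟨hdescent, by simpa using hz0'⟩, ?_⟩
    have hTcard : (T z).card = k := (hT z).1
    have hcapT : T z ∩ U = T z := Finset.inter_eq_left.mpr hTU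
    have hden : ‖coordRestrict z (T z)‖^2 = (k:ℝ) := by
      rw [L1Aux.normsq_restrict, hsumW2, hcapT, hTcard]
    have hcap : (T z)ᶜ ∩ U = U \ T z := by
      ext i; simp [Finset.mem_sdiff, and_comm]
    have hnum_norm : ‖coordRestrict z (T z)ᶜ‖^2 = (k:ℝ) := by
      rw [L1Aux.normsq_restrict, hsumW2, hcap, Finset.card_sdiff_of_subset hTU, hUcard, hTcard]
      have h2k : 2*k - k = k := by omega
      rw [h2k]
    have hsparse : coordRestrict z (T z)ᶜ ∈ sparseVecs n k := by
      refine ⟨U \ T z, ?_, ?_⟩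
      · rw [Finset.card_sdiff_of_subset hTU, hUcard, hTcard]; omega
      · intro i hi
        show (if i ∈ (T z)ᶜ then z i else 0) = 0
        by_cases hiT : i ∈ (T z)ᶜ
        · rw [if_pos hiT]
          have hiTz : i ∉ T z := Finset.mem_compl.mp hiT
          have hiU : i ∉ U := fun h => hi (Finset.mem_sdiff.mpr ⟨h, hiTz⟩)
          exact if_neg hiU
        · rw [if_neg hiT]
    have hgauge : atomNormSigma n k (coordRestrict z (T z)ᶜ) = ‖coordRestrict z (T z)ᶜ‖ :=
      le_antisymm (L1Aux.gauge_le_norm_of_sparse hsparse) (L1Aux.norm_le_gauge hk hnpos _)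
    rw [hgauge, hnum_norm, hden, div_self hkne]
  have hDa : Dsigma n k T (wNorm (fun _ => (1:ℝ))) = 1 :=
    le_antisymm (csSup_le ⟨1, hmemA⟩ hubA) (le_csSup ⟨1, hubA⟩ hmemA)
  refine ⟨hDa, ?_⟩
  intro w hw0 hw1 hwmax hwne
  obtain ⟨istar, histar⟩ := hwmax
  obtain ⟨j0, hj0u, hj0min⟩ := Finset.exists_min_image Finset.univ w
    ⟨⟨0, hnpos⟩, Finset.mem_univ _⟩
  set m := w j0 with hm
  have hm0 : 0 < m := hw0 j0
  have hm1 : m < 1 := by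
    have hex : ∃ j, w j ≠ 1 := by
      by_contra h; push_neg at h; exact hwne (funext h)
    obtain ⟨j, hj⟩ := hex
    exact lt_of_le_of_lt (hj0min j (Finset.mem_univ j)) (lt_of_le_of_ne (hw1 j) hj)
  have h1m : 1 ≤ m⁻¹ := one_le_inv_iff₀.mpr ⟨hm0, hm1.le⟩
  -- upper bound for the D-set of wNorm w
  have hubB : ∀ r ∈ {r : ℝ | ∃ z ∈ descentConeSet (wNorm w) (sparseVecs n k) \ {0},
      r = (atomNormSigma n k (coordRestrict z (T z)ᶜ)) ^ 2 / ‖coordRestrict z (T z)‖ ^ 2},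
      r ≤ (m⁻¹)^2 := by
    rintro r ⟨z, ⟨hzd, hz0⟩, rfl⟩
    have hz0' : z ≠ 0 := by simpa using hz0
    obtain ⟨S, hSk, hSle⟩ := L1Aux.descent_fwd (fun i => (hw0 i).le) hzd
    have hsum := L1Aux.hsum_of_descent hm0 (fun i => hj0min i (Finset.mem_univ i))
      hw1 (hT z).1 (hT z).2 hSk hSle
    exact L1Aux.ratio_le hk hkR hnpos (hT z).1 (hT z).2 h1m hz0' hsum
  -- construction of a good descent vector
  have herase_card : (Finset.univ.erase j0).card = n - 1 := by
    rw [Finset.card_erase_of_mem (Finset.mem_univ j0), Finset.card_univ, Fintype.card_fin]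
  obtain ⟨T₀, hT₀sub, hT₀card, hT₀dom⟩ :=
    L1Aux.exists_topk w (Finset.univ.erase j0) k (by omega)
  have hT₀1 : ∃ i ∈ T₀, w i = 1 := by
    by_cases hstar : istar ∈ T₀
    · exact ⟨istar, hstar, histar⟩
    · obtain ⟨i1, hi1⟩ := Finset.card_pos.mp (by omega : 0 < T₀.card)
      have histar_mem : istar ∈ Finset.univ.erase j0 \ T₀ := by
        rw [Finset.mem_sdiff]
        refine ⟨Finset.mem_erase.mpr ⟨?_, Finset.mem_univ _⟩, hstar⟩
        intro h
        have : m = 1 := by rw [hm, ← h, histar]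
        linarith
      have hd := hT₀dom i1 hi1 istar histar_mem
      exact ⟨i1, hi1, le_antisymm (hw1 i1) (by rw [← histar]; exact hd)⟩
  obtain ⟨i1, hi1T, hi1w⟩ := hT₀1
  have hsd_card : ((Finset.univ.erase j0) \ T₀).card = n - 1 - k := by
    rw [Finset.card_sdiff_of_subset hT₀sub, herase_card, hT₀card]
  obtain ⟨V', hV'sub, hV'card⟩ := Finset.exists_subset_card_eq (s := (Finset.univ.erase j0) \ T₀) (n := k) (by rw [hsd_card]; omega)
  obtain ⟨lm, hlmV', hlmmax⟩ := V'.exists_max_image w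
    (Finset.card_pos.mp (by omega : 0 < V'.card))
  set μ := w lm with hμ
  have hμ0 : 0 < μ := hw0 lm
  have hμ1 : μ ≤ 1 := hw1 lm
  have hμT : ∀ i ∈ T₀, μ ≤ w i := fun i hi => hT₀dom i hi lm (hV'sub hlmV')
  have hsumT : ((k:ℝ) - 1) * μ + 1 ≤ ∑ i ∈ T₀, w i := by
    rw [← Finset.add_sum_erase _ w hi1T, hi1w]
    have h1 : (T₀.erase i1).card • μ ≤ ∑ i ∈ T₀.erase i1, w i :=
      Finset.card_nsmul_le_sum _ _ _ (fun i hi => hμT i (Finset.mem_of_mem_erase hi))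
    rw [Finset.card_erase_of_mem hi1T, hT₀card, nsmul_eq_mul] at h1
    have h2 : ((k-1:ℕ):ℝ) = (k:ℝ) - 1 := by
      rw [Nat.cast_sub hk, Nat.cast_one]
    rw [h2] at h1
    linarith
  have hsumV' : ∑ i ∈ V', w i ≤ (k:ℝ) * μ := by
    have h := Finset.sum_le_card_nsmul V' w μ (fun i hi => hlmmax i hi)
    rwa [hV'card, nsmul_eq_mul] at h
  have hDpos : (0:ℝ) < (k:ℝ) * μ + m := by positivity
  have hkey : (k:ℝ)/((k:ℝ)+1) * ((k:ℝ) * μ + m) < ((k:ℝ) - 1) * μ + 1 := by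
    rw [div_mul_eq_mul_div, div_lt_iff₀ (by positivity : (0:ℝ) < (k:ℝ)+1)]
    have hk1 : (1:ℝ) ≤ (k:ℝ) := by exact_mod_cast hk
    nlinarith [mul_pos hkpos' (by linarith : (0:ℝ) < 1 - m), hμ1]
  set c := min 1 ((((k:ℝ) - 1) * μ + 1)/((k:ℝ) * μ + m)) with hc
  have hcgt : (k:ℝ)/((k:ℝ)+1) < c := by
    apply lt_min
    · rw [div_lt_one (by positivity)]; linarith
    · rw [lt_div_iff₀ hDpos]; exact hkey
  set β := ((k:ℝ)/((k:ℝ)+1) + c)/2 with hβ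
  have hβgt : (k:ℝ)/((k:ℝ)+1) < β := by rw [hβ]; linarith
  have hβltc : β < c := by rw [hβ]; linarith
  have hβpos : 0 < β :=
    lt_trans (div_pos hkpos' (by linarith)) hβgt
  have hβlt1 : β < 1 := lt_of_lt_of_le hβltc (min_le_left _ _)
  have hβD : β * ((k:ℝ) * μ + m) ≤ ((k:ℝ) - 1) * μ + 1 := by
    have h := lt_of_lt_of_le hβltc (min_le_right _ _)
    have h2 := (lt_div_iff₀ hDpos).mp h
    linarith
  set V := insert j0 V' with hV
  have hj0V' : j0 ∉ V' := fun h => by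
    have h2 := hV'sub h
    rw [Finset.mem_sdiff, Finset.mem_erase] at h2
    exact h2.1.1 rfl
  have hVcard : V.card = k + 1 := by
    rw [hV, Finset.card_insert_of_notMem hj0V', hV'card]
  have hVT₀ : ∀ i ∈ T₀, i ∉ V := by
    intro i hi hiV
    rcases Finset.mem_insert.mp hiV with h | h
    · have h2 := hT₀sub hi
      rw [h] at h2
      exact (Finset.mem_erase.mp h2).1 rfl
    · have h2 := hV'sub h
      exact (Finset.mem_sdiff.mp h2).2 hi
  have hT₀V : ∀ i ∈ V, i ∉ T₀ := fun i hi hiT => hVT₀ i hiT hi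
  have hsumVw : ∑ i ∈ V, w i ≤ (k:ℝ) * μ + m := by
    rw [hV, Finset.sum_insert hj0V']
    rw [← hm]
    linarith
  set z : EuclideanSpace ℝ (Fin n) :=
    WithLp.toLp 2 (fun i => if i ∈ T₀ then (1:ℝ) else if i ∈ V then β else 0) with hzdef
  have hz0' : z ≠ 0 := by
    intro h
    have h1 : z i1 = 1 := if_pos hi1T
    rw [h] at h1
    exact zero_ne_one (show (0:ℝ) = 1 from h1)
  have habs : ∀ i, |z i| = if i ∈ T₀ then (1:ℝ) else if i ∈ V then β else 0 := fun i => by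
    show |if i ∈ T₀ then (1:ℝ) else if i ∈ V then β else 0| = _
    by_cases h1 : i ∈ T₀
    · rw [if_pos h1, abs_one]
    · rw [if_neg h1]
      by_cases h2 : i ∈ V
      · rw [if_pos h2, abs_of_pos hβpos]
      · rw [if_neg h2, abs_zero]
  have hdescent : z ∈ descentConeSet (wNorm w) (sparseVecs n k) := by
    refine L1Aux.descent_bwd T₀ (le_of_eq hT₀card) ?_
    have hrhs : ∑ i ∈ T₀, w i * |z i| = ∑ i ∈ T₀, w i := by
      refine Finset.sum_congr rfl fun i hi => ?_
      rw [habs i, if_pos hi, mul_one]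
    have hlhs : ∑ i ∈ T₀ᶜ, w i * |z i| = β * ∑ i ∈ V, w i := by
      have hterm : ∀ i ∈ T₀ᶜ, w i * |z i| = if i ∈ V then w i * β else 0 := by
        intro i hi
        have hiT : i ∉ T₀ := Finset.mem_compl.mp hi
        rw [habs i, if_neg hiT]
        by_cases h2 : i ∈ V
        · rw [if_pos h2, if_pos h2]
        · rw [if_neg h2, if_neg h2, mul_zero]
      rw [Finset.sum_congr rfl hterm, Finset.sum_ite_mem]
      have hinter : T₀ᶜ ∩ V = V :=
        Finset.inter_eq_right.mpr (fun i hi => Finset.mem_compl.mpr (hT₀V i hi))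
      rw [hinter, Finset.mul_sum]
      exact Finset.sum_congr rfl fun i _ => mul_comm _ _
    rw [hlhs, hrhs]
    calc β * ∑ i ∈ V, w i ≤ β * ((k:ℝ) * μ + m) :=
        mul_le_mul_of_nonneg_left hsumVw hβpos.le
      _ ≤ ((k:ℝ) - 1) * μ + 1 := hβD
      _ ≤ ∑ i ∈ T₀, w i := hsumT
  have hTz : T z = T₀ := by
    have hc1 : (T z).card = k := (hT z).1
    have hsub : T₀ ⊆ T z := by
      intro i hi
      by_contra hiT
      have hne : (T z \ T₀).Nonempty := by
        rcases Finset.eq_empty_or_nonempty (T z \ T₀) with he | hne2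
        · exfalso
          have hsub2 : T z ⊆ T₀ := Finset.sdiff_eq_empty_iff_subset.mp he
          have heq2 : T z = T₀ := Finset.eq_of_subset_of_card_le hsub2
            (by rw [hc1, hT₀card])
          rw [← heq2] at hi
          exact hiT hi
        · exact hne2
      obtain ⟨l, hl⟩ := hne
      rw [Finset.mem_sdiff] at hl
      have h1 := (hT z).2 l hl.1 i hiT
      have hzi : z i = 1 := if_pos hi
      have hzl : |z l| ≤ β := by
        rw [habs l, if_neg hl.2]
        by_cases h2 : l ∈ V
        · rw [if_pos h2]
        · rw [if_neg h2]; exact hβpos.le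
      rw [hzi, abs_one] at h1
      linarith
    exact (Finset.eq_of_subset_of_card_le hsub (by rw [hc1, hT₀card])).symm
  have hden : ‖coordRestrict z (T z)‖^2 = (k:ℝ) := by
    rw [hTz, L1Aux.normsq_restrict]
    have hone : ∀ i ∈ T₀, (z i)^2 = 1 := fun i hi => by
      rw [show z i = 1 from if_pos hi]; ring
    rw [Finset.sum_congr rfl hone, Finset.sum_const, hT₀card, nsmul_eq_mul, mul_one]
  have hveq : coordRestrict z (T z)ᶜ = WithLp.toLp 2 (fun i => if i ∈ V then β else 0) := by
    rw [hTz]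
    refine PiLp.ext fun i => ?_
    show (if i ∈ T₀ᶜ then z i else 0) = (if i ∈ V then β else 0)
    by_cases h1 : i ∈ T₀
    · rw [if_neg (by simpa using h1 : i ∉ T₀ᶜ), if_neg (hVT₀ i h1)]
    · rw [if_pos (Finset.mem_compl.mpr h1)]
      show (if i ∈ T₀ then (1:ℝ) else if i ∈ V then β else 0) = _
      rw [if_neg h1]
  have hglow : ((k:ℝ)+1) * β / Real.sqrt k ≤ atomNormSigma n k (coordRestrict z (T z)ᶜ) := by
    rw [hveq]
    exact L1Aux.gauge_lower_ind hk hnpos hβpos.le hVcard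
  have hg0 : 0 ≤ atomNormSigma n k (coordRestrict z (T z)ᶜ) := gauge_nonneg _
  have hr1 : 1 < (atomNormSigma n k (coordRestrict z (T z)ᶜ))^2 / ‖coordRestrict z (T z)‖^2 := by
    rw [hden, lt_div_iff₀ hkpos']
    have hklt : (k:ℝ) < ((k:ℝ)+1) * β := by
      have h := hβgt
      rw [div_lt_iff₀ (by positivity : (0:ℝ) < (k:ℝ)+1)] at h
      linarith
    have hs : (0:ℝ) < Real.sqrt k := Real.sqrt_pos.mpr hkpos'
    have hmss : Real.sqrt k * Real.sqrt k = (k:ℝ) :=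
      Real.mul_self_sqrt (Nat.cast_nonneg k)
    have hlow2 : Real.sqrt k < ((k:ℝ)+1) * β / Real.sqrt k := by
      rw [lt_div_iff₀ hs]
      calc Real.sqrt k * Real.sqrt k = (k:ℝ) := hmss
        _ < ((k:ℝ)+1) * β := hklt
    have hlt : Real.sqrt k < atomNormSigma n k (coordRestrict z (T z)ᶜ) :=
      lt_of_lt_of_le hlow2 hglow
    nlinarith [hmss, hs]
  have hmemB : (atomNormSigma n k (coordRestrict z (T z)ᶜ))^2 / ‖coordRestrict z (T z)‖^2
      ∈ {r : ℝ | ∃ z ∈ descentConeSet (wNorm w) (sparseVecs n k) \ {0},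
      r = (atomNormSigma n k (coordRestrict z (T z)ᶜ)) ^ 2 / ‖coordRestrict z (T z)‖ ^ 2} :=
    ⟨z, ⟨hdescent, by simpa using hz0'⟩, rfl⟩
  have hDb : 1 < Dsigma n k T (wNorm w) :=
    lt_of_lt_of_le hr1 (le_csSup ⟨(m⁻¹)^2, hubB⟩ hmemB)
  refine ⟨hDb, ?_⟩
  rw [hDa]
  have h2 : Real.sqrt (1+1) < Real.sqrt (Dsigma n k T (wNorm w) + 1) :=
    Real.sqrt_lt_sqrt (by norm_num) (by linarith)
  have hpos2 : 0 < Real.sqrt (1+1) := Real.sqrt_pos.mpr (by norm_num)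
  exact one_div_lt_one_div_of_lt hpos2 h2



end
end

section
/- Let k ≥ 1, n ≥ 2k, Σ_k the set of k-sparse vectors of ℝⁿ, w a weight vector with w_i > 0 and max_i w_i = 1, R = ‖·‖_w, and H₀ a set of k indices carrying k largest weights of w. Then sup_{z ∈ T_R(Σ_k)∖{0}} ‖z_{Tᶜ}‖_Σ²/‖z_T‖₂² = sup{ ‖z_{Tᶜ}‖_Σ²/‖z_T‖₂² : z ∈ ℝⁿ, z ≠ 0, ‖z_{H₀}‖_w ≥ ‖z_{H₀ᶜ}‖_w }. -/
open scoped BigOperators ENNReal RealInnerProductSpace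
open MeasureTheory Metric

noncomputable section

/-! ### Auxiliary material -/

section Aux

variable {n k : ℕ}

/-- The atom set: `k`-sparse unit vectors. -/
def atomSet (n k : ℕ) : Set (EuclideanSpace ℝ (Fin n)) :=
  {u : EuclideanSpace ℝ (Fin n) | u ∈ sparseVecs n k ∧ ‖u‖ = 1}

lemma atomNormSigma_def (n k : ℕ) (z : EuclideanSpace ℝ (Fin n)) :
    atomNormSigma n k z = gauge (convexHull ℝ (atomSet n k)) z := rfl

lemma coordRestrict_apply (z : EuclideanSpace ℝ (Fin n)) (S : Finset (Fin n)) (i : Fin n) :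
    coordRestrict z S i = if i ∈ S then z i else 0 := rfl

lemma wNorm_restrict (w : Fin n → ℝ) (z : EuclideanSpace ℝ (Fin n)) (S : Finset (Fin n)) :
    wNorm w (coordRestrict z S) = ∑ i ∈ S, w i * |z i| := by
  unfold wNorm
  calc ∑ i, w i * |coordRestrict z S i| = ∑ i, if i ∈ S then w i * |z i| else 0 := by
        apply Finset.sum_congr rfl; intro i _
        by_cases h : i ∈ S <;> simp [coordRestrict_apply, h]
    _ = ∑ i ∈ Finset.univ ∩ S, w i * |z i| := Finset.sum_ite_mem _ _ _
    _ = ∑ i ∈ S, w i * |z i| := by rw [Finset.univ_inter]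

/-- Signed permutation as a linear map on `EuclideanSpace`. -/
def sgnPermMap (n : ℕ) (π : Equiv.Perm (Fin n)) (ε : Fin n → ℝ) :
    EuclideanSpace ℝ (Fin n) →ₗ[ℝ] EuclideanSpace ℝ (Fin n) where
  toFun x := WithLp.toLp 2 (fun i => ε i * x (π i))
  map_add' x y := by
    ext i; simp only [PiLp.add_apply]; ring
  map_smul' c x := by
    ext i; simp only [PiLp.smul_apply, smul_eq_mul, RingHom.id_apply]; ring

lemma sgnPermMap_apply (π : Equiv.Perm (Fin n)) (ε : Fin n → ℝ)
    (x : EuclideanSpace ℝ (Fin n)) (i : Fin n) :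
    sgnPermMap n π ε x i = ε i * x (π i) := rfl

lemma sgnPerm_mem_atomSet (π : Equiv.Perm (Fin n)) (ε : Fin n → ℝ)
    (hε : ∀ i, ε i = 1 ∨ ε i = -1) {u : EuclideanSpace ℝ (Fin n)} (hu : u ∈ atomSet n k) :
    sgnPermMap n π ε u ∈ atomSet n k := by
  obtain ⟨⟨s, hs, h0⟩, hnorm⟩ := hu
  constructor
  · refine ⟨s.image π.symm, le_trans Finset.card_image_le hs, fun i hi => ?_⟩
    have hπ : π i ∉ s := fun h => hi (Finset.mem_image.mpr ⟨π i, h, by simp⟩)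
    rw [sgnPermMap_apply, h0 _ hπ, mul_zero]
  · rw [EuclideanSpace.norm_eq] at hnorm ⊢
    rw [← hnorm]
    congr 1
    calc ∑ i, ‖sgnPermMap n π ε u i‖ ^ 2 = ∑ i, ‖u (π i)‖ ^ 2 := by
          apply Finset.sum_congr rfl; intro i _
          rw [sgnPermMap_apply]
          rcases hε i with h | h <;> simp [h, neg_one_mul]
      _ = ∑ i, ‖u i‖ ^ 2 := Equiv.sum_comp π (fun j => ‖u j‖ ^ 2)

/-- Invariance of the atomic norm under signed permutations. -/
lemma atomNormSigma_sgnPerm (n k : ℕ) (π : Equiv.Perm (Fin n)) (ε : Fin n → ℝ)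
    (hε : ∀ i, ε i = 1 ∨ ε i = -1) (x : EuclideanSpace ℝ (Fin n)) :
    atomNormSigma n k (WithLp.toLp 2 (fun i => ε i * x (π i))) = atomNormSigma n k x := by
  set Φ := sgnPermMap n π ε with hΦdef
  set Ψ := sgnPermMap n π.symm (fun i => ε (π.symm i)) with hΨdef
  have hΨΦ : ∀ y, Φ (Ψ y) = y := by
    intro y; ext i
    have h : Φ (Ψ y) i = ε i * (ε (π.symm (π i)) * y (π.symm (π i))) := rfl
    rw [h, Equiv.symm_apply_apply]
    rcases hε i with h | h <;> simp [h]
  have hΦΨ : ∀ y, Ψ (Φ y) = y := by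
    intro y; ext i
    have h : Ψ (Φ y) i = ε (π.symm i) * (ε (π.symm i) * y (π (π.symm i))) := rfl
    rw [h, Equiv.apply_symm_apply]
    rcases hε (π.symm i) with h | h <;> simp [h]
  have hA : Φ '' atomSet n k = atomSet n k := by
    apply Set.Subset.antisymm
    · rintro _ ⟨u, hu, rfl⟩; exact sgnPerm_mem_atomSet π ε hε hu
    · intro u hu
      exact ⟨Ψ u, sgnPerm_mem_atomSet π.symm _ (fun i => hε (π.symm i)) hu, hΨΦ u⟩
  have hhull : Φ '' convexHull ℝ (atomSet n k) = convexHull ℝ (atomSet n k) := by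
    rw [Φ.image_convexHull, hA]
  have hmem : ∀ y, y ∈ convexHull ℝ (atomSet n k) ↔ Φ y ∈ convexHull ℝ (atomSet n k) := by
    intro y
    constructor
    · intro h; rw [← hhull]; exact ⟨y, h, rfl⟩
    · intro h; rw [← hhull] at h
      obtain ⟨u, hu, huy⟩ := h
      have : u = y := by
        have := congrArg Ψ huy
        rwa [hΦΨ, hΦΨ] at this
      rwa [← this]
  have hfun : (WithLp.toLp 2 (fun i => ε i * x (π i))) = Φ x := rfl
  rw [hfun, atomNormSigma_def, atomNormSigma_def, gauge_def', gauge_def']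
  congr 1
  ext r
  simp only [Set.mem_sep_iff, Set.mem_Ioi]
  refine and_congr_right fun _ => ?_
  rw [show r⁻¹ • Φ x = Φ (r⁻¹ • x) from (Φ.map_smul _ _).symm, ← hmem]

lemma topk_abs_eq (z : EuclideanSpace ℝ (Fin n)) {V W : Finset (Fin n)}
    (hV : ∀ i ∈ V, ∀ j ∉ V, |z j| ≤ |z i|) (hW : ∀ i ∈ W, ∀ j ∉ W, |z j| ≤ |z i|) :
    ∀ i ∈ V \ W, ∀ j ∈ W \ V, |z i| = |z j| := by
  intro i hi j hj
  rw [Finset.mem_sdiff] at hi hj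
  exact le_antisymm (hW j hj.1 i hi.2) (hV i hi.1 j hj.2)

lemma sum_sq_topk (z : EuclideanSpace ℝ (Fin n)) {V W : Finset (Fin n)}
    (hcard : V.card = W.card)
    (hV : ∀ i ∈ V, ∀ j ∉ V, |z j| ≤ |z i|) (hW : ∀ i ∈ W, ∀ j ∉ W, |z j| ≤ |z i|) :
    ∑ i ∈ V, (z i) ^ 2 = ∑ i ∈ W, (z i) ^ 2 := by
  by_cases hVW : V = W
  · rw [hVW]
  · have hne : (V \ W).Nonempty := by
      rw [Finset.sdiff_nonempty]
      intro hsub; exact hVW (Finset.eq_of_subset_of_card_le hsub (le_of_eq hcard.symm))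
    have hne' : (W \ V).Nonempty := by
      rw [Finset.sdiff_nonempty]
      intro hsub
      exact hVW (Finset.eq_of_subset_of_card_le hsub (le_of_eq hcard)).symm
    obtain ⟨i0, hi0⟩ := hne
    obtain ⟨j0, hj0⟩ := hne'
    have hc := topk_abs_eq z hV hW
    have h1 : ∑ i ∈ V \ W, (z i) ^ 2 = (V \ W).card * (z j0) ^ 2 := by
      rw [Finset.sum_congr rfl (fun i hi => by rw [← sq_abs (z i), hc i hi j0 hj0, sq_abs]),
        Finset.sum_const, nsmul_eq_mul]
    have h2 : ∑ j ∈ W \ V, (z j) ^ 2 = (W \ V).card * (z j0) ^ 2 := by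
      rw [Finset.sum_congr rfl
        (fun j hj => by rw [← sq_abs (z j), ← hc i0 hi0 j hj, hc i0 hi0 j0 hj0, sq_abs]),
        Finset.sum_const, nsmul_eq_mul]
    have hsd : (V \ W).card = (W \ V).card := Finset.card_sdiff_comm hcard
    calc ∑ i ∈ V, (z i) ^ 2
        = ∑ i ∈ V ∩ W, (z i) ^ 2 + ∑ i ∈ V \ W, (z i) ^ 2 :=
          (Finset.sum_inter_add_sum_sdiff V W _).symm
      _ = ∑ i ∈ W ∩ V, (z i) ^ 2 + ∑ i ∈ W \ V, (z i) ^ 2 := by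
          rw [Finset.inter_comm, h1, h2, hsd]
      _ = ∑ i ∈ W, (z i) ^ 2 := Finset.sum_inter_add_sum_sdiff W V _

/-- Involution swapping two disjoint finsets along a bijection. -/
def swapFun {A B : Finset (Fin n)} (e : {x // x ∈ A} ≃ {x // x ∈ B}) : Fin n → Fin n :=
  fun i => if h : i ∈ A then (e ⟨i, h⟩ : Fin n)
    else if h : i ∈ B then (e.symm ⟨i, h⟩ : Fin n) else i

lemma swapFun_of_mem₁ {A B : Finset (Fin n)} (e : {x // x ∈ A} ≃ {x // x ∈ B}) {i : Fin n}
    (h : i ∈ A) : swapFun e i = (e ⟨i, h⟩ : Fin n) := dif_pos h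

lemma swapFun_of_mem₂ {A B : Finset (Fin n)} (hAB : Disjoint A B)
    (e : {x // x ∈ A} ≃ {x // x ∈ B}) {i : Fin n} (h : i ∈ B) :
    swapFun e i = (e.symm ⟨i, h⟩ : Fin n) := by
  have hA : i ∉ A := Finset.disjoint_right.mp hAB h
  rw [swapFun, dif_neg hA, dif_pos h]

lemma swapFun_of_not {A B : Finset (Fin n)} (e : {x // x ∈ A} ≃ {x // x ∈ B}) {i : Fin n}
    (h1 : i ∉ A) (h2 : i ∉ B) : swapFun e i = i := by
  rw [swapFun, dif_neg h1, dif_neg h2]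

lemma swapFun_maps₁ {A B : Finset (Fin n)} (e : {x // x ∈ A} ≃ {x // x ∈ B}) {i : Fin n}
    (h : i ∈ A) : swapFun e i ∈ B := by
  rw [swapFun_of_mem₁ e h]; exact (e ⟨i, h⟩).2

lemma swapFun_maps₂ {A B : Finset (Fin n)} (hAB : Disjoint A B)
    (e : {x // x ∈ A} ≃ {x // x ∈ B}) {i : Fin n} (h : i ∈ B) : swapFun e i ∈ A := by
  rw [swapFun_of_mem₂ hAB e h]; exact (e.symm ⟨i, h⟩).2

lemma swapFun_invol {A B : Finset (Fin n)} (hAB : Disjoint A B)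
    (e : {x // x ∈ A} ≃ {x // x ∈ B}) : Function.Involutive (swapFun e) := by
  intro i
  by_cases h1 : i ∈ A
  · rw [swapFun_of_mem₁ e h1]
    have hb : ((e ⟨i, h1⟩ : {x // x ∈ B}) : Fin n) ∈ B := (e ⟨i, h1⟩).2
    rw [swapFun_of_mem₂ hAB e hb]
    have h : (⟨((e ⟨i, h1⟩ : {x // x ∈ B}) : Fin n), hb⟩ : {x // x ∈ B}) = e ⟨i, h1⟩ :=
      Subtype.ext rfl
    rw [h, Equiv.symm_apply_apply]
  · by_cases h2 : i ∈ B
    · rw [swapFun_of_mem₂ hAB e h2]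
      have ha : ((e.symm ⟨i, h2⟩ : {x // x ∈ A}) : Fin n) ∈ A := (e.symm ⟨i, h2⟩).2
      rw [swapFun_of_mem₁ e ha]
      have h : (⟨((e.symm ⟨i, h2⟩ : {x // x ∈ A}) : Fin n), ha⟩ : {x // x ∈ A})
          = e.symm ⟨i, h2⟩ := Subtype.ext rfl
      rw [h, Equiv.apply_symm_apply]
    · rw [swapFun_of_not e h1 h2, swapFun_of_not e h1 h2]

/-- The good involution matching `S` and `H₀`. -/
lemma exists_perm_S_H0 (w : Fin n → ℝ) (S H₀ : Finset (Fin n)) (hcard : S.card = H₀.card)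
    (hH₀ : ∀ i ∈ H₀, ∀ j ∉ H₀, w j ≤ w i) :
    ∃ f : Fin n → Fin n, Function.Involutive f ∧ (∀ i, i ∈ S ↔ f i ∈ H₀) ∧
      (∀ i ∈ S, w i ≤ w (f i)) ∧ (∀ i ∉ S, w (f i) ≤ w i) := by
  have hc : (S \ H₀).card = (H₀ \ S).card := Finset.card_sdiff_comm hcard
  let e := Finset.equivOfCardEq hc
  have hd : Disjoint (S \ H₀) (H₀ \ S) := disjoint_sdiff_sdiff
  have hcases : ∀ i : Fin n, (swapFun e i = i ∧ (i ∈ S ↔ i ∈ H₀)) ∨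
      (i ∈ S ∧ i ∉ H₀ ∧ swapFun e i ∈ H₀ \ S) ∨
      (i ∉ S ∧ i ∈ H₀ ∧ swapFun e i ∈ S \ H₀) := by
    intro i
    by_cases h1 : i ∈ S <;> by_cases h2 : i ∈ H₀
    · exact Or.inl ⟨swapFun_of_not e (by simp [Finset.mem_sdiff, h2])
        (by simp [Finset.mem_sdiff, h1]), by simp [h1, h2]⟩
    · exact Or.inr (Or.inl ⟨h1, h2, swapFun_maps₁ e (Finset.mem_sdiff.mpr ⟨h1, h2⟩)⟩)
    · exact Or.inr (Or.inr ⟨h1, h2, swapFun_maps₂ hd e (Finset.mem_sdiff.mpr ⟨h2, h1⟩)⟩)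
    · exact Or.inl ⟨swapFun_of_not e (by simp [Finset.mem_sdiff, h1])
        (by simp [Finset.mem_sdiff, h2]), by simp [h1, h2]⟩
  refine ⟨swapFun e, swapFun_invol hd e, ?_, ?_, ?_⟩
  · intro i
    rcases hcases i with ⟨hfi, hiff⟩ | ⟨h1, _, h3⟩ | ⟨h1, _, h3⟩
    · rw [hfi]; exact hiff
    · simp [h1, (Finset.mem_sdiff.mp h3).1]
    · rw [Finset.mem_sdiff] at h3
      simp [h1, h3.2]
  · intro i hi
    rcases hcases i with ⟨hfi, _⟩ | ⟨_, h2, h3⟩ | ⟨h1, _, _⟩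
    · rw [hfi]
    · exact hH₀ _ (Finset.mem_sdiff.mp h3).1 i h2
    · exact absurd hi h1
  · intro i hi
    rcases hcases i with ⟨hfi, _⟩ | ⟨h1, _, _⟩ | ⟨_, h2, h3⟩
    · rw [hfi]
    · exact absurd h1 hi
    · exact hH₀ i h2 _ (Finset.mem_sdiff.mp h3).2

/-- The ratio is invariant under precomposition with an involution. -/
lemma ratio_perm (n k : ℕ)
    (T : EuclideanSpace ℝ (Fin n) → Finset (Fin n))
    (hT : ∀ z, (T z).card = k ∧ ∀ i ∈ T z, ∀ j ∉ T z, |z j| ≤ |z i|)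
    (z z' : EuclideanSpace ℝ (Fin n)) (f : Fin n → Fin n)
    (hf : Function.Involutive f) (hz' : ∀ j, z' j = z (f j)) :
    atomNormSigma n k (coordRestrict z' (T z')ᶜ) = atomNormSigma n k (coordRestrict z (T z)ᶜ)
      ∧ ‖coordRestrict z' (T z')‖ = ‖coordRestrict z (T z)‖ := by
  have hinj : Function.Injective f := hf.injective
  set W' := T z' with hW'
  set V := W'.image f with hVdef
  set W := T z with hWdef
  have hmemV : ∀ i, f i ∈ V ↔ i ∈ W' := by
    intro i
    constructor
    · intro h
      obtain ⟨j, hj, hji⟩ := Finset.mem_image.mp h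
      rwa [← hinj hji]
    · intro h; exact Finset.mem_image_of_mem f h
  have hmemV' : ∀ i, i ∈ V ↔ f i ∈ W' := by
    intro i; have := hmemV (f i); rwa [hf i] at this
  have hVcard : V.card = k := by
    rw [hVdef, Finset.card_image_of_injective _ hinj]; exact (hT z').1
  have hVdom : ∀ i ∈ V, ∀ j ∉ V, |z j| ≤ |z i| := by
    intro i hi j hj
    have hi' : f i ∈ W' := (hmemV' i).mp hi
    have hj' : f j ∉ W' := fun h => hj ((hmemV' j).mpr h)
    have h := (hT z').2 (f i) hi' (f j) hj'
    rw [hz', hz', hf i, hf j] at h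
    exact h
  have hnormsq : ∀ (y : EuclideanSpace ℝ (Fin n)) (G : Finset (Fin n)),
      ‖coordRestrict y G‖ = Real.sqrt (∑ i ∈ G, (y i) ^ 2) := by
    intro y G
    rw [EuclideanSpace.norm_eq]
    congr 1
    calc ∑ i, ‖coordRestrict y G i‖ ^ 2 = ∑ i, if i ∈ G then (y i) ^ 2 else 0 := by
          apply Finset.sum_congr rfl; intro i _
          by_cases h : i ∈ G <;>
            simp [coordRestrict_apply, h, Real.norm_eq_abs, sq_abs]
      _ = ∑ i ∈ Finset.univ ∩ G, (y i) ^ 2 := Finset.sum_ite_mem _ _ _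
      _ = ∑ i ∈ G, (y i) ^ 2 := by rw [Finset.univ_inter]
  have hnorm : ‖coordRestrict z' W'‖ = ‖coordRestrict z W‖ := by
    rw [hnormsq, hnormsq]
    congr 1
    calc ∑ i ∈ W', (z' i) ^ 2 = ∑ i ∈ W', (z (f i)) ^ 2 := by
          apply Finset.sum_congr rfl; intro i _; rw [hz']
      _ = ∑ i ∈ V, (z i) ^ 2 := by
          show ∑ i ∈ W', (z (f i)) ^ 2 = ∑ i ∈ W'.image f, (z i) ^ 2
          rw [Finset.sum_image (fun a _ b _ h => hinj h)]
      _ = ∑ i ∈ W, (z i) ^ 2 := sum_sq_topk z (hVcard.trans (hT z).1.symm) hVdom (hT z).2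
  have hperm1 : atomNormSigma n k (coordRestrict z' W'ᶜ)
      = atomNormSigma n k (coordRestrict z Vᶜ) := by
    have hkey : coordRestrict z' W'ᶜ
        = WithLp.toLp 2 (fun i => (1 : ℝ) * coordRestrict z Vᶜ ((Function.Involutive.toPerm f hf) i)) := by
      ext i
      show coordRestrict z' W'ᶜ i = 1 * coordRestrict z Vᶜ (f i)
      rw [one_mul, coordRestrict_apply, coordRestrict_apply]
      by_cases h : i ∈ W'
      · rw [if_neg (by simp [Finset.mem_compl, h]),
          if_neg (by simp only [Finset.mem_compl, not_not]; exact (hmemV i).mpr h)]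
      · rw [if_pos (Finset.mem_compl.mpr h),
          if_pos (Finset.mem_compl.mpr (fun hv => h ((hmemV i).mp hv))), hz']
    rw [hkey, atomNormSigma_sgnPerm n k _ _ (fun i => Or.inl rfl)]
  have hperm2 : atomNormSigma n k (coordRestrict z Vᶜ)
      = atomNormSigma n k (coordRestrict z Wᶜ) := by
    by_cases hVW : V = W
    · rw [hVW]
    · have hcard2 : V.card = W.card := hVcard.trans (hT z).1.symm
      have hc2 : (V \ W).card = (W \ V).card := Finset.card_sdiff_comm hcard2
      set e2 := Finset.equivOfCardEq hc2 with he2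
      have hd2 : Disjoint (V \ W) (W \ V) := disjoint_sdiff_sdiff
      set g := swapFun e2 with hg
      have hginv : Function.Involutive g := swapFun_invol hd2 e2
      have hties := topk_abs_eq z hVdom (hT z).2
      have hkey : coordRestrict z Wᶜ
          = WithLp.toLp 2 (fun i => (if z i = z (g i) then (1:ℝ) else -1)
              * coordRestrict z Vᶜ ((Function.Involutive.toPerm g hginv) i)) := by
        ext i
        show coordRestrict z Wᶜ i
            = (if z i = z (g i) then (1:ℝ) else -1) * coordRestrict z Vᶜ (g i)
        rw [coordRestrict_apply, coordRestrict_apply]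
        by_cases h1 : i ∈ V <;> by_cases h2 : i ∈ W
        · have hgi : g i = i := swapFun_of_not e2
            (fun hc => (Finset.mem_sdiff.mp hc).2 h2)
            (fun hc => (Finset.mem_sdiff.mp hc).2 h1)
          rw [hgi, if_neg (fun hc => (Finset.mem_compl.mp hc) h2),
            if_neg (fun hc => (Finset.mem_compl.mp hc) h1), mul_zero]
        · have hiv : i ∈ V \ W := Finset.mem_sdiff.mpr ⟨h1, h2⟩
          have hgi : g i ∈ W \ V := swapFun_maps₁ e2 hiv
          have hgiV : g i ∉ V := (Finset.mem_sdiff.mp hgi).2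
          rw [if_pos (Finset.mem_compl.mpr h2), if_pos (Finset.mem_compl.mpr hgiV)]
          have habs : |z i| = |z (g i)| := hties i hiv (g i) hgi
          by_cases hz0 : z i = z (g i)
          · rw [if_pos hz0, one_mul]; exact hz0
          · have hneg : z i = -z (g i) := by
              rcases abs_eq_abs.mp habs with h | h
              · exact absurd h hz0
              · exact h
            rw [if_neg hz0, hneg]; ring
        · have hiw : i ∈ W \ V := Finset.mem_sdiff.mpr ⟨h2, h1⟩
          have hgi : g i ∈ V \ W := swapFun_maps₂ hd2 e2 hiw
          have hgiV : g i ∈ V := (Finset.mem_sdiff.mp hgi).1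
          rw [if_neg (fun hc => (Finset.mem_compl.mp hc) h2),
            if_neg (fun hc => (Finset.mem_compl.mp hc) hgiV), mul_zero]
        · have hgi : g i = i := swapFun_of_not e2
            (fun hc => h1 (Finset.mem_sdiff.mp hc).1)
            (fun hc => h2 (Finset.mem_sdiff.mp hc).1)
          rw [hgi, if_pos (Finset.mem_compl.mpr h2), if_pos (Finset.mem_compl.mpr h1)]
          simp
      rw [hkey, atomNormSigma_sgnPerm n k _ _
        (fun i => by by_cases h : z i = z (g i) <;> simp [h])]
  exact ⟨hperm1.trans hperm2, hnorm⟩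

/-- Membership in the descent cone set gives a dominating set of cardinality `k`. -/
lemma descent_S {n k : ℕ} (hk : 1 ≤ k) (hn : 2 * k ≤ n) (w : Fin n → ℝ)
    (hpos : ∀ i, 0 < w i) {z : EuclideanSpace ℝ (Fin n)}
    (hz : z ∈ descentConeSet (wNorm w) (sparseVecs n k)) :
    ∃ S : Finset (Fin n), S.card = k ∧ ∑ i ∈ Sᶜ, w i * |z i| ≤ ∑ i ∈ S, w i * |z i| := by
  obtain ⟨x, hx, hdz⟩ : ∃ x, x ∈ sparseVecs n k ∧ wNorm w (x + z) ≤ wNorm w x := by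
    have := Set.mem_iUnion₂.mp hz
    obtain ⟨x, hx, hd⟩ := this
    exact ⟨x, hx, hd⟩
  obtain ⟨s, hsk, hx0⟩ := hx
  have hadd : ∀ (a b : EuclideanSpace ℝ (Fin n)) (i : Fin n), (a + b) i = a i + b i :=
    fun _ _ _ => rfl
  have hsum : ∀ y : EuclideanSpace ℝ (Fin n),
      wNorm w y = ∑ i ∈ s, w i * |y i| + ∑ i ∈ sᶜ, w i * |y i| := by
    intro y; rw [wNorm]; exact (Finset.sum_add_sum_compl s _).symm
  have h1 : ∑ i ∈ sᶜ, w i * |z i| ≤ ∑ i ∈ s, w i * |z i| := by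
    have e1 : wNorm w (x + z) = ∑ i ∈ s, w i * |x i + z i| + ∑ i ∈ sᶜ, w i * |z i| := by
      rw [hsum]
      have hs1 : ∑ i ∈ s, w i * |(x + z) i| = ∑ i ∈ s, w i * |x i + z i| :=
        Finset.sum_congr rfl (fun i _ => by rw [hadd])
      have hs2 : ∑ i ∈ sᶜ, w i * |(x + z) i| = ∑ i ∈ sᶜ, w i * |z i| :=
        Finset.sum_congr rfl (fun i hi => by
          rw [hadd, hx0 i (Finset.mem_compl.mp hi), zero_add])
      rw [hs1, hs2]
    have e2 : wNorm w x = ∑ i ∈ s, w i * |x i| := by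
      rw [hsum]
      have h0 : ∑ i ∈ sᶜ, w i * |x i| = 0 := Finset.sum_eq_zero (fun i hi => by
        rw [hx0 i (Finset.mem_compl.mp hi)]; simp)
      rw [h0, add_zero]
    have e3 : ∑ i ∈ s, (w i * |x i| - w i * |z i|) ≤ ∑ i ∈ s, w i * |x i + z i| := by
      apply Finset.sum_le_sum
      intro i _
      have habs : |x i| - |z i| ≤ |x i + z i| := by
        simpa using abs_sub_abs_le_abs_sub (x i) (-(z i))
      calc w i * |x i| - w i * |z i| = w i * (|x i| - |z i|) := by ring
        _ ≤ w i * |x i + z i| := mul_le_mul_of_nonneg_left habs (hpos i).le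
    rw [e1, e2] at hdz
    rw [Finset.sum_sub_distrib] at e3
    linarith
  have hkn : k ≤ n := le_trans (by omega) hn
  obtain ⟨S, hsS, _, hScard⟩ := Finset.exists_subsuperset_card_eq (Finset.subset_univ s)
    hsk (by simpa using hkn)
  have hnonneg : ∀ i : Fin n, 0 ≤ w i * |z i| :=
    fun i => mul_nonneg (hpos i).le (abs_nonneg _)
  refine ⟨S, hScard, ?_⟩
  calc ∑ i ∈ Sᶜ, w i * |z i| ≤ ∑ i ∈ sᶜ, w i * |z i| :=
        Finset.sum_le_sum_of_subset_of_nonneg (Finset.compl_subset_compl.mpr hsS)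
          (fun i _ _ => hnonneg i)
    _ ≤ ∑ i ∈ s, w i * |z i| := h1
    _ ≤ ∑ i ∈ S, w i * |z i| :=
        Finset.sum_le_sum_of_subset_of_nonneg hsS (fun i _ _ => hnonneg i)

end Aux

/-- Lemma 9 of the paper, the supremum defining `D_Σ(R)` for a weighted ℓ¹-norm
can be taken over vectors whose weighted mass on `H₀` dominates the mass outside.  `T` picks,
for each `z`, `k` indices carrying the `k` largest absolute values of coordinates of `z`. -/
theorem Dsigma_eq_sup_over_H0
    (n k : ℕ) (hk : 1 ≤ k) (hn : 2 * k ≤ n)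
    (w : Fin n → ℝ) (hpos : ∀ i, 0 < w i) (hle : ∀ i, w i ≤ 1) (hmax : ∃ i, w i = 1)
    (T : EuclideanSpace ℝ (Fin n) → Finset (Fin n))
    (hT : ∀ z, (T z).card = k ∧ ∀ i ∈ T z, ∀ j ∉ T z, |z j| ≤ |z i|)
    (H₀ : Finset (Fin n)) (hH₀card : H₀.card = k)
    (hH₀ : ∀ i ∈ H₀, ∀ j ∉ H₀, w j ≤ w i) :
    sSup {r : ℝ | ∃ z ∈ descentConeSet (wNorm w) (sparseVecs n k) \ {0},
        r = (atomNormSigma n k (coordRestrict z (T z)ᶜ)) ^ 2 / ‖coordRestrict z (T z)‖ ^ 2}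
      = sSup {r : ℝ | ∃ z : EuclideanSpace ℝ (Fin n), z ≠ 0 ∧
          wNorm w (coordRestrict z H₀ᶜ) ≤ wNorm w (coordRestrict z H₀) ∧
          r = (atomNormSigma n k (coordRestrict z (T z)ᶜ)) ^ 2 / ‖coordRestrict z (T z)‖ ^ 2} := by
  have hsets : {r : ℝ | ∃ z ∈ descentConeSet (wNorm w) (sparseVecs n k) \ {0},
        r = (atomNormSigma n k (coordRestrict z (T z)ᶜ)) ^ 2 / ‖coordRestrict z (T z)‖ ^ 2}
      = {r : ℝ | ∃ z : EuclideanSpace ℝ (Fin n), z ≠ 0 ∧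
          wNorm w (coordRestrict z H₀ᶜ) ≤ wNorm w (coordRestrict z H₀) ∧
          r = (atomNormSigma n k (coordRestrict z (T z)ᶜ)) ^ 2 / ‖coordRestrict z (T z)‖ ^ 2} := by
    ext r
    simp only [Set.mem_setOf_eq, Set.mem_diff, Set.mem_singleton_iff]
    constructor
    · rintro ⟨z, ⟨hzd, hz0⟩, hr⟩
      obtain ⟨S, hScard, hSineq⟩ := descent_S hk hn w hpos hzd
      obtain ⟨f, hfinv, hfiff, hfle1, hfle2⟩ :=
        exists_perm_S_H0 w S H₀ (hScard.trans hH₀card.symm) hH₀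
      set z' : EuclideanSpace ℝ (Fin n) := WithLp.toLp 2 (fun j => z (f j)) with hz'def
      have hz'app : ∀ j, z' j = z (f j) := fun j => rfl
      have hz'0 : z' ≠ 0 := by
        intro h
        apply hz0
        ext i
        have h1 : z' (f i) = 0 := by rw [h]; rfl
        rw [hz'app, hfinv] at h1
        exact h1
      have himg1 : H₀.image f = S := by
        ext j
        simp only [Finset.mem_image]
        constructor
        · rintro ⟨i, hi, rfl⟩
          refine (hfiff (f i)).mpr ?_
          rwa [hfinv i]
        · intro hjS
          exact ⟨f j, (hfiff j).mp hjS, hfinv j⟩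
      have himg2 : H₀ᶜ.image f = Sᶜ := by
        ext j
        simp only [Finset.mem_image, Finset.mem_compl]
        constructor
        · rintro ⟨i, hi, rfl⟩
          intro hfS
          apply hi
          have h := (hfiff (f i)).mp hfS
          rwa [hfinv i] at h
        · intro hjS
          exact ⟨f j, fun h => hjS ((hfiff j).mpr h), hfinv j⟩
      have hsum1 : ∑ j ∈ H₀, w j * |z' j| = ∑ i ∈ S, w (f i) * |z i| := by
        have h := Finset.sum_image (s := H₀) (g := f)
          (f := fun i => w (f i) * |z i|) (fun a _ b _ h => hfinv.injective h)
        rw [himg1] at h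
        rw [h]
        apply Finset.sum_congr rfl
        intro j _
        show w j * |z' j| = w (f (f j)) * |z (f j)|
        rw [hfinv j, hz'app]
      have hsum2 : ∑ j ∈ H₀ᶜ, w j * |z' j| = ∑ i ∈ Sᶜ, w (f i) * |z i| := by
        have h := Finset.sum_image (s := H₀ᶜ) (g := f)
          (f := fun i => w (f i) * |z i|) (fun a _ b _ h => hfinv.injective h)
        rw [himg2] at h
        rw [h]
        apply Finset.sum_congr rfl
        intro j _
        show w j * |z' j| = w (f (f j)) * |z (f j)|
        rw [hfinv j, hz'app]
      refine ⟨z', hz'0, ?_, ?_⟩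
      · rw [wNorm_restrict, wNorm_restrict]
        calc ∑ i ∈ H₀ᶜ, w i * |z' i| = ∑ i ∈ Sᶜ, w (f i) * |z i| := hsum2
          _ ≤ ∑ i ∈ Sᶜ, w i * |z i| := Finset.sum_le_sum (fun i hi =>
              mul_le_mul_of_nonneg_right (hfle2 i (Finset.mem_compl.mp hi)) (abs_nonneg _))
          _ ≤ ∑ i ∈ S, w i * |z i| := hSineq
          _ ≤ ∑ i ∈ S, w (f i) * |z i| := Finset.sum_le_sum (fun i hi =>
              mul_le_mul_of_nonneg_right (hfle1 i hi) (abs_nonneg _))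
          _ = ∑ i ∈ H₀, w i * |z' i| := hsum1.symm
      · obtain ⟨ha, hb⟩ := ratio_perm n k T hT z z' f hfinv hz'app
        rw [hr, ha, hb]
    · rintro ⟨z, hz0, hzineq, hr⟩
      refine ⟨z, ⟨?_, hz0⟩, hr⟩
      set x : EuclideanSpace ℝ (Fin n) := WithLp.toLp 2 (fun i => if i ∈ H₀ then -(2 * z i) else 0) with hxdef
      have hxapp : ∀ i, x i = if i ∈ H₀ then -(2 * z i) else 0 := fun i => rfl
      have hadd : ∀ (a b : EuclideanSpace ℝ (Fin n)) (i : Fin n), (a + b) i = a i + b i :=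
        fun _ _ _ => rfl
      apply Set.mem_iUnion₂.mpr
      refine ⟨x, ⟨H₀, le_of_eq hH₀card, fun i hi => by rw [hxapp, if_neg hi]⟩, ?_⟩
      show wNorm w (x + z) ≤ wNorm w x
      rw [wNorm_restrict, wNorm_restrict] at hzineq
      have e1 : wNorm w (x + z) = ∑ i ∈ H₀, w i * |z i| + ∑ i ∈ H₀ᶜ, w i * |z i| := by
        rw [wNorm, ← Finset.sum_add_sum_compl H₀]
        have hs1 : ∑ i ∈ H₀, w i * |(x + z) i| = ∑ i ∈ H₀, w i * |z i| :=
          Finset.sum_congr rfl (fun i hi => by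
            rw [hadd, hxapp, if_pos hi,
              show -(2 * z i) + z i = -(z i) by ring, abs_neg])
        have hs2 : ∑ i ∈ H₀ᶜ, w i * |(x + z) i| = ∑ i ∈ H₀ᶜ, w i * |z i| :=
          Finset.sum_congr rfl (fun i hi => by
            rw [hadd, hxapp, if_neg (Finset.mem_compl.mp hi), zero_add])
        rw [hs1, hs2]
      have e2 : wNorm w x = ∑ i ∈ H₀, 2 * (w i * |z i|) := by
        rw [wNorm, ← Finset.sum_add_sum_compl H₀]
        have h0 : ∑ i ∈ H₀ᶜ, w i * |x i| = 0 := Finset.sum_eq_zero (fun i hi => by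
          rw [hxapp, if_neg (Finset.mem_compl.mp hi)]; simp)
        rw [h0, add_zero]
        apply Finset.sum_congr rfl
        intro i hi
        rw [hxapp, if_pos hi, abs_neg, abs_mul]
        rw [abs_two]
        ring
      rw [e1, e2, ← Finset.mul_sum]
      linarith
  rw [hsets]

end
end
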